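/- arXiv:2209.09289 — 3 statements merged into one kernel-verified Lean document; each statement's English description precedes it below -/
import Mathlib

section
/- Let $k,\ell,d$ be positive integers with $d<k$, let $0<\delta'<\delta<1$, and suppose $n$ and $\ell$ are sufficiently large in terms of $k$ and $\delta-\delta'$. Let $H$ be a $k$-uniform hypergraph on an $n$-vertex set $V$ such that every $d$-set $S\subseteq V$ satisfies $\deg(S,V)\ge\delta n^{k-d}$. Let $A\subseteq V$ be a uniformly random set of size $\ell$. Then for every $d$-set $T\subseteq V$, $\mathbb{P}[\deg(T,A)<\delta'\ell^{k-d}]\le 2\exp(-\ell(\delta-\delta')^2/2)$. -/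
open scoped Classical

open Finset

variable {α : Type*} [DecidableEq α]

/-- Double counting: summing over (r+1)-subsets with a distinguished element. -/
lemma sum_insert_powersetCard (V : Finset α) (r : ℕ) (g : Finset α → ℝ) :
    ∑ x ∈ V, ∑ A ∈ (V.erase x).powersetCard r, g (insert x A)
      = (r + 1 : ℝ) * ∑ A ∈ V.powersetCard (r + 1), g A := by
  have step1 : ∀ x ∈ V, ∑ A ∈ (V.erase x).powersetCard r, g (insert x A)
      = ∑ A ∈ (V.powersetCard (r + 1)).filter (fun A => x ∈ A), g A := by
    intro x hx
    refine Finset.sum_nbij' (fun A => insert x A) (fun A => A.erase x) ?_ ?_ ?_ ?_ ?_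
    · intro A hA
      rw [Finset.mem_powersetCard] at hA
      have hxA : x ∉ A := fun h => (Finset.mem_erase.1 (hA.1 h)).1 rfl
      rw [Finset.mem_filter, Finset.mem_powersetCard]
      refine ⟨⟨?_, by rw [Finset.card_insert_of_notMem hxA, hA.2]⟩, Finset.mem_insert_self _ _⟩
      intro a ha
      rcases Finset.mem_insert.1 ha with rfl | ha
      · exact hx
      · exact Finset.mem_of_mem_erase (hA.1 ha)
    · intro A hA
      rw [Finset.mem_filter, Finset.mem_powersetCard] at hA
      rw [Finset.mem_powersetCard]
      constructor
      · exact fun a ha => Finset.mem_erase.2 ⟨(Finset.mem_erase.1 ha).1,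
          hA.1.1 (Finset.mem_of_mem_erase ha)⟩
      · rw [Finset.card_erase_of_mem hA.2, hA.1.2]; omega
    · intro A hA
      rw [Finset.mem_powersetCard] at hA
      have hxA : x ∉ A := fun h => (Finset.mem_erase.1 (hA.1 h)).1 rfl
      rw [Finset.erase_insert hxA]
    · intro A hA
      rw [Finset.mem_filter] at hA
      rw [Finset.insert_erase hA.2]
    · intro A _; rfl
  rw [Finset.sum_congr rfl step1]
  have : ∑ x ∈ V, ∑ A ∈ (V.powersetCard (r + 1)).filter (fun A => x ∈ A), g A
      = ∑ A ∈ V.powersetCard (r + 1), ∑ x ∈ V, if x ∈ A then g A else 0 := by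
    simp_rw [Finset.sum_filter]
    exact Finset.sum_comm
  rw [this, Finset.mul_sum]
  refine Finset.sum_congr rfl fun A hA => ?_
  rw [Finset.mem_powersetCard] at hA
  rw [Finset.sum_ite_mem, Finset.inter_eq_right.2 hA.1, Finset.sum_const, hA.2]
  simp [nsmul_eq_mul]
variable {α : Type*} [DecidableEq α]

/-- Chord bound: for a function with pairwise differences ≤ c on a nonempty finite set,
the exponential moment of deviation from the mean is at most exp(λ²c²/2). -/
lemma sum_exp_dev_le (V : Finset α) (hV : V.Nonempty) (g : α → ℝ) (c lam : ℝ) (hc : 0 ≤ c)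
    (hg : ∀ x ∈ V, ∀ y ∈ V, |g x - g y| ≤ c) :
    ∑ x ∈ V, Real.exp (lam * ((∑ y ∈ V, g y) / V.card - g x))
      ≤ V.card * Real.exp (lam ^ 2 * c ^ 2 / 2) := by
  have hcard : (0 : ℝ) < V.card := by
    exact_mod_cast Finset.card_pos.2 hV
  set μ : ℝ := (∑ y ∈ V, g y) / V.card with hμ
  have hdev : ∀ x ∈ V, |μ - g x| ≤ c := by
    intro x hx
    have : μ - g x = (∑ y ∈ V, (g y - g x)) / V.card := by
      rw [Finset.sum_sub_distrib, Finset.sum_const, sub_div, hμ]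
      congr 1
      rw [nsmul_eq_mul, mul_comm, mul_div_assoc, div_self (ne_of_gt hcard), mul_one]
    rw [this, abs_div, abs_of_pos hcard, div_le_iff₀ hcard]
    calc |∑ y ∈ V, (g y - g x)| ≤ ∑ y ∈ V, |g y - g x| := Finset.abs_sum_le_sum_abs _ _
      _ ≤ ∑ _y ∈ V, c := Finset.sum_le_sum fun y hy => hg y hy x hx
      _ = c * V.card := by rw [Finset.sum_const, nsmul_eq_mul, mul_comm]
  have hsum0 : ∑ x ∈ V, (μ - g x) = 0 := by
    rw [Finset.sum_sub_distrib, Finset.sum_const, nsmul_eq_mul, hμ]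
    field_simp
    ring
  rcases eq_or_lt_of_le hc with rfl | hcpos
  · have : ∀ x ∈ V, Real.exp (lam * (μ - g x)) = 1 := by
      intro x hx
      have h1 : |μ - g x| ≤ 0 := hdev x hx
      have : μ - g x = 0 := abs_eq_zero.1 (le_antisymm h1 (abs_nonneg _))
      rw [this, mul_zero, Real.exp_zero]
    rw [Finset.sum_congr rfl this, Finset.sum_const, nsmul_eq_mul, mul_one]
    nlinarith [Real.exp_pos (lam ^ 2 * (0:ℝ) ^ 2 / 2), Real.one_le_exp (by positivity : (0:ℝ) ≤ lam ^ 2 * (0:ℝ) ^ 2 / 2)]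
  · -- main case c > 0
    have key : ∀ x ∈ V, Real.exp (lam * (μ - g x)) ≤
        ((c - (μ - g x)) / (2 * c)) * Real.exp (-(lam * c))
          + ((c + (μ - g x)) / (2 * c)) * Real.exp (lam * c) := by
      intro x hx
      set y := μ - g x with hy
      have hy1 : -c ≤ y := neg_le_of_abs_le (hdev x hx)
      have hy2 : y ≤ c := le_of_abs_le (hdev x hx)
      have ha : (0:ℝ) ≤ (c - y) / (2 * c) := by
        apply div_nonneg (by linarith) (by linarith)
      have hb : (0:ℝ) ≤ (c + y) / (2 * c) := by
        apply div_nonneg (by linarith) (by linarith)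
      have hab : (c - y) / (2 * c) + (c + y) / (2 * c) = 1 := by
        field_simp; ring
      have := convexOn_exp.2 (Set.mem_univ (-(lam * c))) (Set.mem_univ (lam * c)) ha hb hab
      simp only [smul_eq_mul] at this
      have harg : (c - y) / (2 * c) * -(lam * c) + (c + y) / (2 * c) * (lam * c) = lam * y := by
        field_simp; ring
      rwa [harg] at this
    calc ∑ x ∈ V, Real.exp (lam * (μ - g x))
        ≤ ∑ x ∈ V, (((c - (μ - g x)) / (2 * c)) * Real.exp (-(lam * c))
          + ((c + (μ - g x)) / (2 * c)) * Real.exp (lam * c)) :=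
          Finset.sum_le_sum key
      _ = (∑ x ∈ V, (c - (μ - g x))) / (2 * c) * Real.exp (-(lam * c))
          + (∑ x ∈ V, (c + (μ - g x))) / (2 * c) * Real.exp (lam * c) := by
          rw [Finset.sum_add_distrib]
          congr 1 <;> rw [← Finset.sum_mul, ← Finset.sum_div]
      _ = (V.card : ℝ) * ((Real.exp (lam * c) + Real.exp (-(lam * c))) / 2) := by
          rw [Finset.sum_sub_distrib, Finset.sum_add_distrib, hsum0, Finset.sum_const,
            nsmul_eq_mul, sub_zero, add_zero]
          have h2c : (2:ℝ) * c ≠ 0 := by positivity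
          field_simp
          ring
      _ = (V.card : ℝ) * Real.cosh (lam * c) := by rw [Real.cosh_eq]
      _ ≤ (V.card : ℝ) * Real.exp (lam ^ 2 * c ^ 2 / 2) := by
          refine mul_le_mul_of_nonneg_left ?_ (le_of_lt hcard)
          calc Real.cosh (lam * c) ≤ Real.exp ((lam * c) ^ 2 / 2) := Real.cosh_le_exp_half_sq _
            _ = Real.exp (lam ^ 2 * c ^ 2 / 2) := by rw [mul_pow]
variable {α : Type*} [DecidableEq α]

lemma sum_insert_diff_le (V : Finset α) (r : ℕ) (f : Finset α → ℝ) (c : ℝ) (hc : 0 ≤ c)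
    (hswap : ∀ A ∈ V.powersetCard (r + 1), ∀ x ∈ A, ∀ y ∈ V, y ∉ A →
      |f A - f (insert y (A.erase x))| ≤ c)
    {x y : α} (hx : x ∈ V) (hy : y ∈ V) :
    |∑ A ∈ (V.erase x).powersetCard r, f (insert x A)
      - ∑ A ∈ (V.erase y).powersetCard r, f (insert y A)|
      ≤ ((V.erase x).powersetCard r).card * c := by
  rcases eq_or_ne x y with rfl | hxy
  · rw [sub_self, abs_zero]; positivity
  have hmem : ∀ u v : α, u ∈ V → u ≠ v → ∀ A ∈ (V.erase u).powersetCard r,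
      (if v ∈ A then insert u (A.erase v) else A) ∈ (V.erase v).powersetCard r := by
    intro u v hu huv A hA
    rw [Finset.mem_powersetCard] at hA
    have huA : u ∉ A := fun h => (Finset.mem_erase.1 (hA.1 h)).1 rfl
    by_cases hvA : v ∈ A
    · rw [if_pos hvA, Finset.mem_powersetCard]
      constructor
      · intro a ha
        rcases Finset.mem_insert.1 ha with rfl | ha
        · exact Finset.mem_erase.2 ⟨huv, hu⟩
        · exact Finset.mem_erase.2 ⟨(Finset.mem_erase.1 ha).1,
            Finset.mem_of_mem_erase (hA.1 (Finset.mem_of_mem_erase ha))⟩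
      · have huAe : u ∉ A.erase v := fun h => huA (Finset.mem_of_mem_erase h)
        rw [Finset.card_insert_of_notMem huAe, Finset.card_erase_of_mem hvA, hA.2]
        have : 1 ≤ r := by
          rw [← hA.2]; exact Finset.card_pos.2 ⟨v, hvA⟩
        omega
    · rw [if_neg hvA, Finset.mem_powersetCard]
      refine ⟨fun a ha => Finset.mem_erase.2 ⟨?_, Finset.mem_of_mem_erase (hA.1 ha)⟩, hA.2⟩
      rintro rfl; exact hvA ha
  have hinv : ∀ u v : α, ∀ A ∈ (V.erase u).powersetCard r,
      (if u ∈ (if v ∈ A then insert u (A.erase v) else A) then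
        insert v ((if v ∈ A then insert u (A.erase v) else A).erase u)
       else (if v ∈ A then insert u (A.erase v) else A)) = A := by
    intro u v A hA
    rw [Finset.mem_powersetCard] at hA
    have huA : u ∉ A := fun h => (Finset.mem_erase.1 (hA.1 h)).1 rfl
    by_cases hvA : v ∈ A
    · simp only [if_pos hvA]
      have huAe : u ∉ A.erase v := fun h => huA (Finset.mem_of_mem_erase h)
      rw [if_pos (Finset.mem_insert_self _ _), Finset.erase_insert huAe,
        Finset.insert_erase hvA]
    · simp only [if_neg hvA, if_neg huA]
  have key : ∑ A ∈ (V.erase x).powersetCard r,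
        f (insert y (if y ∈ A then insert x (A.erase y) else A))
      = ∑ A ∈ (V.erase y).powersetCard r, f (insert y A) :=
    Finset.sum_nbij' (fun A => if y ∈ A then insert x (A.erase y) else A)
      (fun B => if x ∈ B then insert y (B.erase x) else B)
      (hmem x y hx hxy) (hmem y x hy hxy.symm) (hinv x y) (hinv y x) (fun A _ => rfl)
  rw [← key, ← Finset.sum_sub_distrib]
  calc |∑ A ∈ (V.erase x).powersetCard r,
        (f (insert x A) - f (insert y (if y ∈ A then insert x (A.erase y) else A)))|
      ≤ ∑ A ∈ (V.erase x).powersetCard r,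
        |f (insert x A) - f (insert y (if y ∈ A then insert x (A.erase y) else A))| :=
        Finset.abs_sum_le_sum_abs _ _
    _ ≤ ∑ _A ∈ (V.erase x).powersetCard r, c := by
        refine Finset.sum_le_sum fun A hA => ?_
        rw [Finset.mem_powersetCard] at hA
        have hxA : x ∉ A := fun h => (Finset.mem_erase.1 (hA.1 h)).1 rfl
        by_cases hyA : y ∈ A
        · rw [if_pos hyA]
          have : insert y (insert x (A.erase y)) = insert x A := by
            rw [Finset.insert_comm, Finset.insert_erase hyA]
          rw [this, sub_self, abs_zero]
          exact hc
        · rw [if_neg hyA]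
          have hA0 : insert x A ∈ V.powersetCard (r + 1) := by
            rw [Finset.mem_powersetCard]
            refine ⟨?_, by rw [Finset.card_insert_of_notMem hxA, hA.2]⟩
            intro a ha
            rcases Finset.mem_insert.1 ha with rfl | ha
            · exact hx
            · exact Finset.mem_of_mem_erase (hA.1 ha)
          have hynA : y ∉ insert x A := by
            intro h
            rcases Finset.mem_insert.1 h with rfl | h
            · exact hxy rfl
            · exact hyA h
          have := hswap _ hA0 x (Finset.mem_insert_self _ _) y hy hynA
          rwa [Finset.erase_insert hxA] at this
    _ = ((V.erase x).powersetCard r).card * c := by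
        rw [Finset.sum_const, nsmul_eq_mul]

/-- McDiarmid-type mgf bound for a function of a uniform random `r`-subset. -/
lemma mgf_bound (c lam : ℝ) (hc : 0 ≤ c) :
    ∀ (r : ℕ) (V : Finset α) (f : Finset α → ℝ),
    (∀ A ∈ V.powersetCard r, ∀ x ∈ A, ∀ y ∈ V, y ∉ A →
      |f A - f (insert y (A.erase x))| ≤ c) →
    ∑ A ∈ V.powersetCard r,
        Real.exp (lam * ((∑ B ∈ V.powersetCard r, f B) / ((V.powersetCard r).card : ℝ) - f A))
      ≤ ((V.powersetCard r).card : ℝ) * Real.exp (lam ^ 2 * r * c ^ 2 / 2) := by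
  intro r
  induction r with
  | zero =>
    intro V f _
    simp [Finset.powersetCard_zero]
  | succ r ih =>
    intro V f hswap
    by_cases hcard : V.card < r + 1
    · have : V.powersetCard (r + 1) = ∅ := by
        rw [Finset.powersetCard_eq_empty]; exact hcard
      rw [this]
      simp
    push_neg at hcard
    obtain ⟨n', hn'⟩ : ∃ n', V.card = n' + 1 := ⟨V.card - 1, by omega⟩
    have hVne : V.Nonempty := Finset.card_pos.1 (by omega)
    have hKnat : (V.powersetCard (r + 1)).card = (n' + 1).choose (r + 1) := by
      rw [Finset.card_powersetCard, hn']
    have hKpos : (0:ℝ) < ((V.powersetCard (r + 1)).card : ℝ) := by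
      rw [hKnat]; exact_mod_cast Nat.choose_pos (by omega)
    set μ := (∑ B ∈ V.powersetCard (r + 1), f B) / ((V.powersetCard (r + 1)).card : ℝ) with hμ
    have hKxcard : ∀ x ∈ V, ((V.erase x).powersetCard r).card = n'.choose r := by
      intro x hx; rw [Finset.card_powersetCard, Finset.card_erase_of_mem hx, hn', Nat.add_sub_cancel]
    have hKrpos : (0:ℝ) < (n'.choose r : ℝ) := by
      exact_mod_cast Nat.choose_pos (by omega)
    set Sx := fun x => ∑ A ∈ (V.erase x).powersetCard r, f (insert x A) with hSx
    set μx := fun x => Sx x / (n'.choose r : ℝ) with hμx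
    have hsub : ∀ x ∈ V, ∀ A ∈ (V.erase x).powersetCard r, ∀ u ∈ A, ∀ v ∈ V.erase x, v ∉ A →
        |f (insert x A) - f (insert x (insert v (A.erase u)))| ≤ c := by
      intro x hx A hA u hu v hv hvA
      rw [Finset.mem_powersetCard] at hA
      have hxA : x ∉ A := fun h => (Finset.mem_erase.1 (hA.1 h)).1 rfl
      have hux : u ≠ x := fun h => hxA (h ▸ hu)
      have hvx : v ≠ x := (Finset.mem_erase.1 hv).1
      have hA0 : insert x A ∈ V.powersetCard (r + 1) := by
        rw [Finset.mem_powersetCard]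
        refine ⟨?_, by rw [Finset.card_insert_of_notMem hxA, hA.2]⟩
        intro a ha
        rcases Finset.mem_insert.1 ha with rfl | ha
        · exact hx
        · exact Finset.mem_of_mem_erase (hA.1 ha)
      have hvnA : v ∉ insert x A := by
        intro h
        rcases Finset.mem_insert.1 h with rfl | h
        · exact hvx rfl
        · exact hvA h
      have := hswap _ hA0 u (Finset.mem_insert_of_mem hu) v (Finset.mem_of_mem_erase hv) hvnA
      have heq : insert v ((insert x A).erase u) = insert x (insert v (A.erase u)) := by
        rw [Finset.erase_insert_of_ne hux.symm, Finset.insert_comm]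
      rwa [heq] at this
    have hIH : ∀ x ∈ V, ∑ A ∈ (V.erase x).powersetCard r,
        Real.exp (lam * (μx x - f (insert x A)))
        ≤ (n'.choose r : ℝ) * Real.exp (lam ^ 2 * r * c ^ 2 / 2) := by
      intro x hx
      have h := ih (V.erase x) (fun A => f (insert x A)) (hsub x hx)
      rw [hKxcard x hx] at h
      exact h
    have hsum_ident : ∀ g : Finset α → ℝ,
        ∑ x ∈ V, ∑ A ∈ (V.erase x).powersetCard r, g (insert x A)
          = (r + 1 : ℝ) * ∑ A ∈ V.powersetCard (r + 1), g A :=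
      fun g => sum_insert_powersetCard V r g
    have hchooseR : ((n' + 1 : ℕ) : ℝ) * (n'.choose r : ℝ)
        = ((n' + 1).choose (r + 1) : ℝ) * ((r + 1 : ℕ) : ℝ) := by
      exact_mod_cast Nat.add_one_mul_choose_eq n' r
    have hmean : (∑ x ∈ V, μx x) / (V.card : ℝ) = μ := by
      simp only [hμx, hSx]
      rw [← Finset.sum_div, hsum_ident f, hμ, hKnat, hn']
      rw [div_div]
      have hKrne : ((n'.choose r : ℕ) : ℝ) ≠ 0 := ne_of_gt hKrpos
      have hKne : (((n' + 1).choose (r + 1) : ℕ) : ℝ) ≠ 0 := by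
        exact_mod_cast (Nat.choose_pos (by omega : r + 1 ≤ n' + 1)).ne'
      have hn1ne : (((n' + 1 : ℕ)) : ℝ) ≠ 0 := by positivity
      rw [div_eq_div_iff (mul_ne_zero hKrne hn1ne) hKne]
      push_cast
      push_cast at hchooseR
      linear_combination (-(∑ A ∈ V.powersetCard (r + 1), f A)) * hchooseR
    have hpair : ∀ x ∈ V, ∀ y ∈ V, |μx x - μx y| ≤ c := by
      intro x hx y hy
      have h3 := sum_insert_diff_le V r f c hc hswap hx hy
      rw [hKxcard x hx] at h3
      simp only [hμx]
      rw [div_sub_div_same, abs_div, abs_of_pos hKrpos, div_le_iff₀ hKrpos]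
      calc |Sx x - Sx y| ≤ (n'.choose r : ℝ) * c := h3
        _ = c * (n'.choose r : ℝ) := by ring
    have hdev := sum_exp_dev_le V hVne μx c lam hc hpair
    rw [hmean] at hdev
    have main : (r + 1 : ℝ) * (∑ A ∈ V.powersetCard (r + 1), Real.exp (lam * (μ - f A)))
        ≤ (r + 1 : ℝ) * (((V.powersetCard (r + 1)).card : ℝ)
            * Real.exp (lam ^ 2 * (r + 1 : ℕ) * c ^ 2 / 2)) := by
      rw [← hsum_ident (fun A => Real.exp (lam * (μ - f A)))]
      calc ∑ x ∈ V, ∑ A ∈ (V.erase x).powersetCard r, Real.exp (lam * (μ - f (insert x A)))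
          = ∑ x ∈ V, Real.exp (lam * (μ - μx x))
              * ∑ A ∈ (V.erase x).powersetCard r, Real.exp (lam * (μx x - f (insert x A))) := by
            refine Finset.sum_congr rfl fun x hx => ?_
            rw [Finset.mul_sum]
            refine Finset.sum_congr rfl fun A hA => ?_
            rw [← Real.exp_add]
            congr 1
            ring
        _ ≤ ∑ x ∈ V, Real.exp (lam * (μ - μx x))
              * ((n'.choose r : ℝ) * Real.exp (lam ^ 2 * r * c ^ 2 / 2)) := by
            refine Finset.sum_le_sum fun x hx => ?_
            exact mul_le_mul_of_nonneg_left (hIH x hx) (Real.exp_pos _).le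
        _ = ((n'.choose r : ℝ) * Real.exp (lam ^ 2 * r * c ^ 2 / 2))
              * ∑ x ∈ V, Real.exp (lam * (μ - μx x)) := by
            rw [Finset.mul_sum]
            exact Finset.sum_congr rfl fun x _ => mul_comm _ _
        _ ≤ ((n'.choose r : ℝ) * Real.exp (lam ^ 2 * r * c ^ 2 / 2))
              * ((V.card : ℝ) * Real.exp (lam ^ 2 * c ^ 2 / 2)) := by
            refine mul_le_mul_of_nonneg_left hdev (by positivity)
        _ = (r + 1 : ℝ) * (((V.powersetCard (r + 1)).card : ℝ)
              * Real.exp (lam ^ 2 * (r + 1 : ℕ) * c ^ 2 / 2)) := by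
            rw [hKnat, hn']
            have hexp : Real.exp (lam ^ 2 * r * c ^ 2 / 2) * Real.exp (lam ^ 2 * c ^ 2 / 2)
                = Real.exp (lam ^ 2 * ((r + 1 : ℕ) : ℝ) * c ^ 2 / 2) := by
              rw [← Real.exp_add]; congr 1; push_cast; ring
            calc ((n'.choose r : ℝ) * Real.exp (lam ^ 2 * r * c ^ 2 / 2))
                  * (((n' + 1 : ℕ) : ℝ) * Real.exp (lam ^ 2 * c ^ 2 / 2))
                = (((n' + 1 : ℕ) : ℝ) * (n'.choose r : ℝ))
                    * (Real.exp (lam ^ 2 * r * c ^ 2 / 2) * Real.exp (lam ^ 2 * c ^ 2 / 2)) := by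
                  ring
              _ = (((n' + 1).choose (r + 1) : ℝ) * ((r + 1 : ℕ) : ℝ))
                    * Real.exp (lam ^ 2 * ((r + 1 : ℕ) : ℝ) * c ^ 2 / 2) := by
                  rw [hchooseR, hexp]
              _ = (r + 1 : ℝ) * (((n' + 1).choose (r + 1) : ℝ)
                    * Real.exp (lam ^ 2 * ((r + 1 : ℕ) : ℝ) * c ^ 2 / 2)) := by
                  push_cast; ring
    have hr1 : (0:ℝ) < (r + 1 : ℝ) := by positivity
    have := le_of_mul_le_mul_left main hr1
    convert this using 2

lemma card_filter_mem_le (A : Finset α) {x : α} (hx : x ∈ A) (m : ℕ)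
    (P : Finset α → Prop) [DecidablePred P] :
    (((A.powersetCard m).filter P).filter (fun W => x ∈ W)).card
      ≤ (A.erase x).card.choose (m - 1) := by
  rw [← Finset.card_powersetCard (m - 1) (A.erase x)]
  apply Finset.card_le_card_of_injOn (fun W => W.erase x)
  · intro W hW
    rw [Finset.mem_coe, Finset.mem_filter, Finset.mem_filter, Finset.mem_powersetCard] at hW
    rw [Finset.mem_coe, Finset.mem_powersetCard]
    exact ⟨Finset.erase_subset_erase x hW.1.1.1,
      by rw [Finset.card_erase_of_mem hW.2, hW.1.1.2]⟩
  · intro W1 h1 W2 h2 he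
    simp only [Finset.coe_filter, Set.mem_setOf_eq] at h1 h2
    have hx1 : x ∈ W1 := h1.2
    have hx2 : x ∈ W2 := h2.2
    rw [← Finset.insert_erase hx1, ← Finset.insert_erase hx2]
    simp only at he
    rw [he]

lemma deg_swap_one (P : Finset α → Prop) [DecidablePred P] (m : ℕ) (A : Finset α) {x y : α}
    (hx : x ∈ A) (hy : y ∉ A) :
    ((A.powersetCard m).filter P).card
      ≤ (((insert y (A.erase x)).powersetCard m).filter P).card
        + (A.erase x).card.choose (m - 1) := by
  have hsub : (A.powersetCard m).filter P ⊆
      ((insert y (A.erase x)).powersetCard m).filter P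
        ∪ ((A.powersetCard m).filter P).filter (fun W => x ∈ W) := by
    intro W hW
    have hW' := hW
    rw [Finset.mem_filter, Finset.mem_powersetCard] at hW
    by_cases hxW : x ∈ W
    · exact Finset.mem_union_right _ (Finset.mem_filter.2 ⟨hW', hxW⟩)
    · refine Finset.mem_union_left _ (Finset.mem_filter.2
        ⟨Finset.mem_powersetCard.2 ⟨?_, hW.1.2⟩, hW.2⟩)
      intro a ha
      exact Finset.mem_insert_of_mem (Finset.mem_erase.2 ⟨fun h => hxW (h ▸ ha), hW.1.1 ha⟩)
  calc ((A.powersetCard m).filter P).card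
      ≤ (((insert y (A.erase x)).powersetCard m).filter P
          ∪ ((A.powersetCard m).filter P).filter (fun W => x ∈ W)).card :=
        Finset.card_le_card hsub
    _ ≤ (((insert y (A.erase x)).powersetCard m).filter P).card
          + (((A.powersetCard m).filter P).filter (fun W => x ∈ W)).card :=
        Finset.card_union_le _ _
    _ ≤ _ := by
        exact Nat.add_le_add_left (card_filter_mem_le A hx m P) _

lemma deg_swap_abs (P : Finset α → Prop) [DecidablePred P] (m ℓ : ℕ) (A : Finset α)
    (hA : A.card = ℓ) {x y : α} (hx : x ∈ A) (hy : y ∉ A) :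
    |((((A.powersetCard m).filter P).card : ℝ))
      - ((((insert y (A.erase x)).powersetCard m).filter P).card : ℝ)|
      ≤ ((ℓ - 1).choose (m - 1) : ℝ) := by
  set B := insert y (A.erase x) with hB
  have hyB : y ∈ B := Finset.mem_insert_self _ _
  have hxy : x ≠ y := fun h => hy (h ▸ hx)
  have hxB : x ∉ B := by
    rw [hB]
    intro h
    rcases Finset.mem_insert.1 h with h | h
    · exact hxy h
    · exact (Finset.mem_erase.1 h).1 rfl
  have hyAe : y ∉ A.erase x := fun h => hy (Finset.mem_of_mem_erase h)
  have hBcard : B.card = ℓ := by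
    rw [hB, Finset.card_insert_of_notMem hyAe, Finset.card_erase_of_mem hx, hA]
    have : 1 ≤ ℓ := by rw [← hA]; exact Finset.card_pos.2 ⟨x, hx⟩
    omega
  have hBA : insert x (B.erase y) = A := by
    rw [hB, Finset.erase_insert hyAe, Finset.insert_erase hx]
  have hAe : (A.erase x).card = ℓ - 1 := by rw [Finset.card_erase_of_mem hx, hA]
  have hBe : (B.erase y).card = ℓ - 1 := by rw [Finset.card_erase_of_mem hyB, hBcard]
  have h1 := deg_swap_one P m A hx hy
  have h2 := deg_swap_one P m B hyB hxB
  rw [hAe] at h1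
  rw [hBA, hBe] at h2
  rw [abs_sub_le_iff]
  constructor
  · have := (Nat.cast_le (α := ℝ)).2 h1
    push_cast at this ⊢
    linarith
  · have := (Nat.cast_le (α := ℝ)).2 h2
    push_cast at this ⊢
    linarith

lemma count_supersets (V W : Finset α) (ℓ : ℕ) (hW : W ⊆ V) (hWℓ : W.card ≤ ℓ) :
    ((V.powersetCard ℓ).filter (fun A => W ⊆ A)).card
      = (V.card - W.card).choose (ℓ - W.card) := by
  rw [← Finset.card_sdiff_of_subset hW, ← Finset.card_powersetCard (ℓ - W.card) (V \ W)]
  apply Finset.card_nbij' (fun A => A \ W) (fun A' => A' ∪ W)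
  · intro A hA
    rw [Finset.mem_coe, Finset.mem_filter, Finset.mem_powersetCard] at hA
    rw [Finset.mem_coe, Finset.mem_powersetCard]
    exact ⟨Finset.sdiff_subset_sdiff hA.1.1 Finset.Subset.rfl,
      by rw [Finset.card_sdiff_of_subset hA.2, hA.1.2]⟩
  · intro A' hA'
    rw [Finset.mem_coe, Finset.mem_powersetCard] at hA'
    have hdisj : Disjoint A' W := by
      refine Finset.disjoint_left.2 fun a ha haW => ?_
      exact (Finset.mem_sdiff.1 (hA'.1 ha)).2 haW
    rw [Finset.mem_coe, Finset.mem_filter, Finset.mem_powersetCard]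
    refine ⟨⟨Finset.union_subset (fun a ha => (Finset.mem_sdiff.1 (hA'.1 ha)).1) hW, ?_⟩,
      Finset.subset_union_right⟩
    rw [Finset.card_union_of_disjoint hdisj, hA'.2]
    omega
  · intro A hA
    rw [Finset.mem_coe, Finset.mem_filter] at hA
    exact Finset.sdiff_union_of_subset hA.2
  · intro A' hA'
    rw [Finset.mem_coe, Finset.mem_powersetCard] at hA'
    have hdisj : Disjoint A' W := by
      refine Finset.disjoint_left.2 fun a ha haW => ?_
      exact (Finset.mem_sdiff.1 (hA'.1 ha)).2 haW
    exact Finset.union_sdiff_cancel_right hdisj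

lemma deg_sum_eq (V : Finset α) (P : Finset α → Prop) [DecidablePred P] (m ℓ : ℕ)
    (hmℓ : m ≤ ℓ) :
    ∑ A ∈ V.powersetCard ℓ, ((((A.powersetCard m).filter P).card : ℝ))
      = (((V.powersetCard m).filter P).card : ℝ) * ((V.card - m).choose (ℓ - m) : ℝ) := by
  have h1 : ∀ A ∈ V.powersetCard ℓ, (A.powersetCard m).filter P
      = ((V.powersetCard m).filter P).filter (fun W => W ⊆ A) := by
    intro A hA
    rw [Finset.mem_powersetCard] at hA
    ext W
    simp only [Finset.mem_filter, Finset.mem_powersetCard]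
    constructor
    · exact fun h => ⟨⟨⟨h.1.1.trans hA.1, h.1.2⟩, h.2⟩, h.1.1⟩
    · exact fun h => ⟨⟨h.2, h.1.1.2⟩, h.1.2⟩
  calc ∑ A ∈ V.powersetCard ℓ, ((((A.powersetCard m).filter P).card : ℝ))
      = ∑ A ∈ V.powersetCard ℓ,
          ∑ W ∈ (V.powersetCard m).filter P, (if W ⊆ A then (1:ℝ) else 0) := by
        refine Finset.sum_congr rfl fun A hA => ?_
        rw [h1 A hA]
        exact (Finset.sum_boole _ _).symm
    _ = ∑ W ∈ (V.powersetCard m).filter P,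
          ∑ A ∈ V.powersetCard ℓ, (if W ⊆ A then (1:ℝ) else 0) := Finset.sum_comm
    _ = ∑ W ∈ (V.powersetCard m).filter P, ((V.card - m).choose (ℓ - m) : ℝ) := by
        refine Finset.sum_congr rfl fun W hW => ?_
        rw [Finset.mem_filter, Finset.mem_powersetCard] at hW
        rw [Finset.sum_boole]
        rw [← hW.1.2] at hmℓ ⊢
        rw [count_supersets V W ℓ hW.1.1 hmℓ]
    _ = (((V.powersetCard m).filter P).card : ℝ) * ((V.card - m).choose (ℓ - m) : ℝ) := by
        rw [Finset.sum_const, nsmul_eq_mul]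

lemma lam_iden (t D : ℝ) (hD : D ≠ 0) : (t / D) ^ 2 * D / 2 - (t / D) * t = -(t ^ 2 / (2 * D)) := by
  field_simp
  ring

set_option maxHeartbeats 3200000 in
/-- Lemma 3.4 (lem:McDAppl): degree of a fixed `d`-set into a uniformly random `ℓ`-set
is concentrated. -/
theorem stmt_4 (k d : ℕ) (hd1 : 1 ≤ d) (hdk : d < k) (δ δ' : ℝ)
    (h0 : 0 < δ') (h1 : δ' < δ) (h2 : δ < 1) :
    ∃ N : ℕ, ∀ n ℓ : ℕ, N ≤ n → N ≤ ℓ → ℓ ≤ n →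
      ∀ H : Finset (Finset (Fin n)), (∀ e ∈ H, e.card = k) →
        (∀ S : Finset (Fin n), S.card = d →
          δ * (n : ℝ) ^ (k - d) ≤
            ((((Finset.univ : Finset (Fin n)).powersetCard (k - d)).filter
              (fun W => S ∪ W ∈ H)).card : ℝ)) →
        ∀ T : Finset (Fin n), T.card = d →
          ((((Finset.univ : Finset (Fin n)).powersetCard ℓ).filter
              (fun A => (((A.powersetCard (k - d)).filter
                (fun W => T ∪ W ∈ H)).card : ℝ) < δ' * (ℓ : ℝ) ^ (k - d))).card : ℝ) /
            ((((Finset.univ : Finset (Fin n)).powersetCard ℓ).card : ℝ)) ≤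
            2 * Real.exp (-(ℓ : ℝ) * (δ - δ') ^ 2 / 2) := by
  obtain ⟨m', hkd⟩ : ∃ m', k - d = m' + 1 := ⟨k - d - 1, by omega⟩
  set Δ := δ - δ' with hΔdef
  have hΔ : 0 < Δ := by rw [hΔdef]; linarith
  have hΔ1 : Δ < 1 := by rw [hΔdef]; linarith
  have hδ'1 : δ' < 1 := by linarith
  have hδ'Δ : δ' * Δ ≤ 1 / 4 := by rw [hΔdef]; nlinarith [sq_nonneg (δ' - (δ - δ'))]
  clear_value Δ
  refine ⟨⌈(8 * (k : ℝ) ^ 2 + 2) / Δ⌉₊ + k + 2, ?_⟩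
  intro n ℓ hNn hNℓ hℓn H hH hdeg T hT
  rw [hkd]
  specialize hdeg T hT
  rw [hkd] at hdeg
  -- basic size facts
  have hm'k : m' + 1 ≤ k := by omega
  have hℓm : m' + 2 ≤ ℓ := by omega
  have hℓ1 : 1 ≤ ℓ := by omega
  have hℓR : (0 : ℝ) < (ℓ : ℝ) := by exact_mod_cast (by omega : 0 < ℓ)
  have hceil : (8 * (k : ℝ) ^ 2 + 2) / Δ ≤ (ℓ : ℝ) := by
    calc (8 * (k : ℝ) ^ 2 + 2) / Δ ≤ (⌈(8 * (k : ℝ) ^ 2 + 2) / Δ⌉₊ : ℝ) := Nat.le_ceil _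
      _ ≤ (ℓ : ℝ) := by exact_mod_cast (by omega : ⌈(8 * (k : ℝ) ^ 2 + 2) / Δ⌉₊ ≤ ℓ)
  have hℓΔbig : 8 * (k : ℝ) ^ 2 + 2 ≤ (ℓ : ℝ) * Δ := by
    rw [div_le_iff₀ hΔ] at hceil; linarith
  clear hceil hNn hNℓ
  have hm'R : ((m' : ℝ)) ≤ (k : ℝ) := by exact_mod_cast (by omega : m' ≤ k)
  have hm'0 : (0 : ℝ) ≤ (m' : ℝ) := Nat.cast_nonneg _
  -- the error quantity e
  set e : ℝ := (m' : ℝ) ^ 2 / (ℓ : ℝ) with he_def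
  have he0 : 0 ≤ e := by rw [he_def]; positivity
  have hℓe : (ℓ : ℝ) * e = (m' : ℝ) ^ 2 := by
    rw [he_def]; field_simp
  have h8e : 8 * (m' : ℝ) ^ 2 + 2 ≤ (ℓ : ℝ) * Δ := by nlinarith
  have he8 : e ≤ Δ / 8 := by
    rw [he_def, div_le_div_iff₀ hℓR (by norm_num : (0:ℝ) < 8)]
    nlinarith
  have he18 : e ≤ 1 / 8 := by linarith
  have heΔ : 2 * δ' * e ≤ Δ / 4 := by nlinarith
  clear_value e
  -- binomial quantities
  have hc_pos_nat : 0 < (ℓ - 1).choose m' := Nat.choose_pos (by omega)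
  set cR : ℝ := (((ℓ - 1).choose m' : ℕ) : ℝ) with hc_def
  have hcR : (0 : ℝ) < cR := by rw [hc_def]; exact_mod_cast hc_pos_nat
  set K1 : ℝ := ((Nat.factorial m' : ℕ) : ℝ) with hK1_def
  have hK1 : (1 : ℝ) ≤ K1 := by
    rw [hK1_def]; exact_mod_cast Nat.one_le_iff_ne_zero.2 (Nat.factorial_pos m').ne'
  -- F1 : ℓ^m' ≤ K1 * cR * (1 + 2e)
  have hdescN : (ℓ - m') ^ m' ≤ (ℓ - 1).descFactorial m' := by
    have h := Nat.pow_sub_le_descFactorial (ℓ - 1) m'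
    have heq : ℓ - 1 + 1 - m' = ℓ - m' := by omega
    rwa [heq] at h
  have hdescF : (((ℓ - 1).descFactorial m' : ℕ) : ℝ) = K1 * cR := by
    rw [hK1_def, hc_def, ← Nat.cast_mul]
    exact_mod_cast congrArg (fun x : ℕ => (x : ℝ))
      (Nat.descFactorial_eq_factorial_mul_choose (ℓ - 1) m')
  clear_value cR K1
  have hbern : (ℓ : ℝ) ^ m' * (1 - e) ≤ (((ℓ - m' : ℕ) : ℝ)) ^ m' := by
    have hcast : ((ℓ - m' : ℕ) : ℝ) = (ℓ : ℝ) - (m' : ℝ) := by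
      rw [Nat.cast_sub (by omega)]
    rw [hcast]
    have hden : -(2:ℝ) ≤ -((m' : ℝ) / (ℓ : ℝ)) := by
      have : (m' : ℝ) / (ℓ : ℝ) ≤ 1 := by
        rw [div_le_one hℓR]; exact_mod_cast (by omega : m' ≤ ℓ)
      linarith
    have hB := one_add_mul_le_pow hden m'
    have h1e : 1 - e = 1 + (m' : ℝ) * (-((m' : ℝ) / (ℓ : ℝ))) := by
      rw [he_def]; field_simp; ring
    have hfac : ((ℓ : ℝ) - (m' : ℝ)) ^ m' = (ℓ : ℝ) ^ m' * (1 - (m' : ℝ) / (ℓ : ℝ)) ^ m' := by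
      rw [← mul_pow]
      congr 1
      field_simp
    calc (ℓ : ℝ) ^ m' * (1 - e) = (ℓ : ℝ) ^ m' * (1 + (m' : ℝ) * (-((m' : ℝ) / (ℓ : ℝ)))) := by
          rw [h1e]
      _ ≤ (ℓ : ℝ) ^ m' * (1 - (m' : ℝ) / (ℓ : ℝ)) ^ m' := by
          apply mul_le_mul_of_nonneg_left hB (by positivity)
      _ = ((ℓ : ℝ) - (m' : ℝ)) ^ m' := hfac.symm
  have hF1 : (ℓ : ℝ) ^ m' ≤ K1 * cR * (1 + 2 * e) := by
    have hstep : (ℓ : ℝ) ^ m' * (1 - e) ≤ K1 * cR := by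
      calc (ℓ : ℝ) ^ m' * (1 - e) ≤ (((ℓ - m' : ℕ) : ℝ)) ^ m' := hbern
        _ ≤ (((ℓ - 1).descFactorial m' : ℕ) : ℝ) := by exact_mod_cast hdescN
        _ = K1 * cR := hdescF
    have h3 : (ℓ : ℝ) ^ m' * (1 - e) * (1 + 2 * e) ≤ K1 * cR * (1 + 2 * e) :=
      mul_le_mul_of_nonneg_right hstep (by linarith)
    have hexp2 : (ℓ : ℝ) ^ m' * (1 - e) * (1 + 2 * e)
        = (ℓ : ℝ) ^ m' + ((ℓ : ℝ) ^ m' * e) * (1 - 2 * e) := by ring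
    have h4 : 0 ≤ ((ℓ : ℝ) ^ m' * e) * (1 - 2 * e) :=
      mul_nonneg (mul_nonneg (pow_nonneg hℓR.le m') he0) (by linarith)
    rw [hexp2] at h3
    linarith
  -- main objects
  have hKnat : ((Finset.univ : Finset (Fin n)).powersetCard ℓ).card = n.choose ℓ := by
    rw [Finset.card_powersetCard, Finset.card_univ, Fintype.card_fin]
  have hKpos : (0 : ℝ) < (((Finset.univ : Finset (Fin n)).powersetCard ℓ).card : ℝ) := by
    rw [hKnat]; exact_mod_cast Nat.choose_pos hℓn
  set f : Finset (Fin n) → ℝ := fun A =>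
    ((((A.powersetCard (m' + 1)).filter (fun W => T ∪ W ∈ H)).card : ℕ) : ℝ) with hf_def
  set μ : ℝ := (∑ A ∈ (Finset.univ : Finset (Fin n)).powersetCard ℓ, f A) /
    ((((Finset.univ : Finset (Fin n)).powersetCard ℓ).card : ℕ) : ℝ) with hμ_def
  -- swap bound
  have hswap : ∀ A ∈ (Finset.univ : Finset (Fin n)).powersetCard ℓ, ∀ x ∈ A,
      ∀ y ∈ (Finset.univ : Finset (Fin n)), y ∉ A → |f A - f (insert y (A.erase x))| ≤ cR := by
    intro A hA x hx y _ hy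
    have hAcard : A.card = ℓ := (Finset.mem_powersetCard.1 hA).2
    have h := deg_swap_abs (fun W => T ∪ W ∈ H) (m' + 1) ℓ A hAcard hx hy
    rw [Nat.add_sub_cancel] at h
    rw [hf_def, hc_def]
    exact h
  -- mean computation
  have hsum : ∑ A ∈ (Finset.univ : Finset (Fin n)).powersetCard ℓ, f A
      = ((((Finset.univ : Finset (Fin n)).powersetCard (m' + 1)).filter
          (fun W => T ∪ W ∈ H)).card : ℝ) * (((n - (m' + 1)).choose (ℓ - (m' + 1)) : ℕ) : ℝ) := by
    have h := deg_sum_eq (Finset.univ : Finset (Fin n)) (fun W => T ∪ W ∈ H) (m' + 1) ℓ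
      (by omega)
    rw [Finset.card_univ, Fintype.card_fin] at h
    rw [hf_def]
    exact h
  -- nat binomial identities
  have hstepA : ℓ * ((ℓ - 1).choose m') = ℓ.choose (m' + 1) * (m' + 1) := by
    have h := Nat.add_one_mul_choose_eq (ℓ - 1) m'
    rwa [show ℓ - 1 + 1 = ℓ by omega] at h
  have hstepB : n.choose ℓ * ℓ.choose (m' + 1)
      = n.choose (m' + 1) * ((n - (m' + 1)).choose (ℓ - (m' + 1))) :=
    Nat.choose_mul (by omega)
  have hstepC : Nat.factorial (m' + 1) * n.choose (m' + 1) ≤ n ^ (m' + 1) := by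
    rw [← Nat.descFactorial_eq_factorial_mul_choose]
    exact Nat.descFactorial_le_pow n (m' + 1)
  have hA_R : (ℓ : ℝ) * cR = ((ℓ.choose (m' + 1) : ℕ) : ℝ) * (((m' + 1 : ℕ)) : ℝ) := by
    rw [hc_def]; exact_mod_cast hstepA
  have hB_R : ((n.choose ℓ : ℕ) : ℝ) * ((ℓ.choose (m' + 1) : ℕ) : ℝ)
      = ((n.choose (m' + 1) : ℕ) : ℝ) * (((n - (m' + 1)).choose (ℓ - (m' + 1)) : ℕ) : ℝ) := by
    exact_mod_cast hstepB
  have hC_R : ((Nat.factorial (m' + 1) : ℕ) : ℝ) * ((n.choose (m' + 1) : ℕ) : ℝ)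
      ≤ (n : ℝ) ^ (m' + 1) := by
    exact_mod_cast hstepC
  have hfacR : K1 * (((m' + 1 : ℕ)) : ℝ) = ((Nat.factorial (m' + 1) : ℕ) : ℝ) := by
    rw [hK1_def, Nat.factorial_succ]
    push_cast
    ring
  have hKcR : K1 * (ℓ : ℝ) * cR
      = ((Nat.factorial (m' + 1) : ℕ) : ℝ) * ((ℓ.choose (m' + 1) : ℕ) : ℝ) := by
    rw [mul_assoc, hA_R, ← hfacR]; ring
  have hC2 : (0 : ℝ) ≤ (((n - (m' + 1)).choose (ℓ - (m' + 1)) : ℕ) : ℝ) := by positivity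
  have hμKey : δ * (K1 * (ℓ : ℝ) * cR) * ((n.choose ℓ : ℕ) : ℝ)
      ≤ ((((Finset.univ : Finset (Fin n)).powersetCard (m' + 1)).filter
          (fun W => T ∪ W ∈ H)).card : ℝ) * (((n - (m' + 1)).choose (ℓ - (m' + 1)) : ℕ) : ℝ) := by
    calc δ * (K1 * (ℓ : ℝ) * cR) * ((n.choose ℓ : ℕ) : ℝ)
        = δ * (((Nat.factorial (m' + 1) : ℕ) : ℝ) * (((n.choose ℓ : ℕ) : ℝ)
            * ((ℓ.choose (m' + 1) : ℕ) : ℝ))) := by rw [hKcR]; ring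
      _ = δ * (((Nat.factorial (m' + 1) : ℕ) : ℝ) * ((n.choose (m' + 1) : ℕ) : ℝ))
            * (((n - (m' + 1)).choose (ℓ - (m' + 1)) : ℕ) : ℝ) := by
          rw [hB_R]; ring
      _ ≤ δ * (n : ℝ) ^ (m' + 1) * (((n - (m' + 1)).choose (ℓ - (m' + 1)) : ℕ) : ℝ) := by
          apply mul_le_mul_of_nonneg_right _ hC2
          apply mul_le_mul_of_nonneg_left hC_R (by linarith)
      _ ≤ _ := mul_le_mul_of_nonneg_right hdeg hC2
  have hμlow : δ * (K1 * (ℓ : ℝ) * cR) ≤ μ := by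
    rw [hμ_def, le_div_iff₀ hKpos, hsum]
    calc δ * (K1 * (ℓ : ℝ) * cR) * (((Finset.univ : Finset (Fin n)).powersetCard ℓ).card : ℝ)
        = δ * (K1 * (ℓ : ℝ) * cR) * ((n.choose ℓ : ℕ) : ℝ) := by rw [hKnat]
      _ ≤ _ := hμKey
  clear_value f μ
  -- deviation threshold
  set t' : ℝ := μ - δ' * (ℓ : ℝ) ^ (m' + 1) with ht'_def
  have ht'low : K1 * (ℓ : ℝ) * cR * (Δ - 2 * δ' * e) ≤ t' := by
    have hpow : (ℓ : ℝ) ^ (m' + 1) = (ℓ : ℝ) ^ m' * (ℓ : ℝ) := pow_succ _ _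
    have hup : δ' * (ℓ : ℝ) ^ (m' + 1) ≤ δ' * (ℓ : ℝ) * (K1 * cR * (1 + 2 * e)) := by
      rw [hpow]
      have h4 := mul_le_mul_of_nonneg_left hF1 (by positivity : (0:ℝ) ≤ δ' * (ℓ : ℝ))
      have h4' : δ' * ((ℓ : ℝ) ^ m' * (ℓ : ℝ)) = δ' * (ℓ : ℝ) * (ℓ : ℝ) ^ m' := by ring
      rw [h4']
      exact h4
    rw [ht'_def]
    have hke : K1 * (ℓ : ℝ) * cR * (Δ - 2 * δ' * e)
        = δ * (K1 * (ℓ : ℝ) * cR) - δ' * (ℓ : ℝ) * (K1 * cR * (1 + 2 * e)) := by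
      rw [hΔdef]; ring
    linarith only [hμlow, hup, hke]
  have ht'pos : 0 < t' := by
    have hgap : Δ / 2 ≤ Δ - 2 * δ' * e := by linarith only [heΔ, hΔ]
    have h5 : 0 < K1 * (ℓ : ℝ) * cR * (Δ - 2 * δ' * e) := by
      apply mul_pos (by positivity)
      linarith only [hgap, hΔ]
    linarith only [h5, ht'low]
  clear_value t'
  -- Chernoff
  set lam : ℝ := t' / ((ℓ : ℝ) * cR ^ 2) with hlam_def
  have hlam0 : 0 ≤ lam := by
    rw [hlam_def]; positivity
  clear_value lam
  have hmgf := mgf_bound cR lam hcR.le ℓ (Finset.univ : Finset (Fin n)) f hswap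
  rw [← hμ_def] at hmgf
  set bad := ((Finset.univ : Finset (Fin n)).powersetCard ℓ).filter
    (fun A => f A < δ' * (ℓ : ℝ) ^ (m' + 1)) with hbad_def
  have hbad_eq : bad = ((Finset.univ : Finset (Fin n)).powersetCard ℓ).filter
      (fun A => (((A.powersetCard (m' + 1)).filter
        (fun W => T ∪ W ∈ H)).card : ℝ) < δ' * (ℓ : ℝ) ^ (m' + 1)) := by
    rw [hbad_def, hf_def]
  have hchern : (bad.card : ℝ) * Real.exp (lam * t')
      ≤ ((((Finset.univ : Finset (Fin n)).powersetCard ℓ).card : ℕ) : ℝ)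
        * Real.exp (lam ^ 2 * (ℓ : ℕ) * cR ^ 2 / 2) := by
    calc (bad.card : ℝ) * Real.exp (lam * t')
        = ∑ _A ∈ bad, Real.exp (lam * t') := by
          rw [Finset.sum_const, nsmul_eq_mul]
      _ ≤ ∑ A ∈ bad, Real.exp (lam * (μ - f A)) := by
          refine Finset.sum_le_sum fun A hA => ?_
          rw [hbad_def, Finset.mem_filter] at hA
          apply Real.exp_le_exp.2
          apply mul_le_mul_of_nonneg_left _ hlam0
          rw [ht'_def]
          linarith only [hA.2]
      _ ≤ ∑ A ∈ (Finset.univ : Finset (Fin n)).powersetCard ℓ, Real.exp (lam * (μ - f A)) :=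
          Finset.sum_le_sum_of_subset_of_nonneg (by rw [hbad_def]; exact Finset.filter_subset _ _)
            fun A _ _ => (Real.exp_pos _).le
      _ ≤ _ := hmgf
  have hbadle : (bad.card : ℝ)
      ≤ ((((Finset.univ : Finset (Fin n)).powersetCard ℓ).card : ℕ) : ℝ)
        * Real.exp (-(t' ^ 2 / (2 * (ℓ : ℝ) * cR ^ 2))) := by
    have hDne : ((ℓ : ℝ) * cR ^ 2) ≠ 0 := by positivity
    have hexpeq : lam ^ 2 * ((ℓ : ℕ) : ℝ) * cR ^ 2 / 2 - lam * t'
        = -(t' ^ 2 / (2 * (ℓ : ℝ) * cR ^ 2)) := by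
      have hstart : lam ^ 2 * ((ℓ : ℕ) : ℝ) * cR ^ 2 / 2 - lam * t'
          = (t' / ((ℓ : ℝ) * cR ^ 2)) ^ 2 * ((ℓ : ℝ) * cR ^ 2) / 2
            - (t' / ((ℓ : ℝ) * cR ^ 2)) * t' := by
        rw [hlam_def]; ring
      have hfin2 : -(t' ^ 2 / (2 * ((ℓ : ℝ) * cR ^ 2))) = -(t' ^ 2 / (2 * (ℓ : ℝ) * cR ^ 2)) := by
        ring_nf
      rw [hstart, lam_iden t' ((ℓ : ℝ) * cR ^ 2) hDne, hfin2]
    have he1 : (0:ℝ) < Real.exp (lam * t') := Real.exp_pos _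
    have h2' : (bad.card : ℝ)
        ≤ ((((Finset.univ : Finset (Fin n)).powersetCard ℓ).card : ℕ) : ℝ)
          * Real.exp (lam ^ 2 * (ℓ : ℕ) * cR ^ 2 / 2) / Real.exp (lam * t') := by
      rw [le_div_iff₀ he1]; exact hchern
    rwa [mul_div_assoc, ← Real.exp_sub, hexpeq] at h2'
  -- final numeric comparison
  have hlog2 : (0.6931471803 : ℝ) < Real.log 2 := Real.log_two_gt_d9
  have hcomp : (ℓ : ℝ) * Δ ^ 2 / 2 - Real.log 2 ≤ t' ^ 2 / (2 * (ℓ : ℝ) * cR ^ 2) := by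
    have ht0nn : 0 ≤ K1 * (ℓ : ℝ) * cR * (Δ - 2 * δ' * e) := by
      apply mul_nonneg (by positivity)
      linarith
    have hmon : (K1 * (ℓ : ℝ) * cR * (Δ - 2 * δ' * e)) ^ 2 ≤ t' ^ 2 :=
      pow_le_pow_left₀ ht0nn ht'low 2
    have ht0sq : (K1 * (ℓ : ℝ) * cR * (Δ - 2 * δ' * e)) ^ 2 / (2 * (ℓ : ℝ) * cR ^ 2)
        = K1 ^ 2 * (ℓ : ℝ) * (Δ - 2 * δ' * e) ^ 2 / 2 := by
      field_simp
    have h5 : K1 ^ 2 * (ℓ : ℝ) * (Δ - 2 * δ' * e) ^ 2 / 2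
        ≤ t' ^ 2 / (2 * (ℓ : ℝ) * cR ^ 2) := by
      rw [← ht0sq]
      exact (div_le_div_iff_of_pos_right (by positivity)).2 hmon
    rcases le_or_gt m' 1 with hm1 | hm2
    · have hK1eq : K1 = 1 := by
        rw [hK1_def]
        interval_cases m' <;> norm_num [Nat.factorial]
      have hm'sq : (m' : ℝ) ^ 2 ≤ 1 := by
        have hms : m' ^ 2 ≤ 1 := by
          interval_cases m' <;> norm_num
        exact_mod_cast hms
      have hkey : (ℓ : ℝ) * Δ ^ 2 / 2 - (ℓ : ℝ) * (Δ - 2 * δ' * e) ^ 2 / 2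
          = 2 * δ' * Δ * ((ℓ : ℝ) * e) - 2 * δ' ^ 2 * e * ((ℓ : ℝ) * e) := by ring
      have q1 := mul_le_mul_of_nonneg_right hδ'Δ (sq_nonneg ((m' : ℝ)))
      have q2 : (1 / 4 : ℝ) * (m' : ℝ) ^ 2 ≤ 1 / 4 := by linarith only [hm'sq]
      have h7 : 2 * δ' * Δ * ((ℓ : ℝ) * e) ≤ 1 / 2 := by
        rw [hℓe]
        linarith only [q1, q2]
      have h8 : 0 ≤ 2 * δ' ^ 2 * e * ((ℓ : ℝ) * e) := by
        have := mul_nonneg (mul_nonneg (by positivity : (0:ℝ) ≤ 2 * δ' ^ 2) he0)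
          (mul_nonneg hℓR.le he0)
        linarith only [this]
      have h9 : (ℓ : ℝ) * Δ ^ 2 / 2 - Real.log 2 ≤ K1 ^ 2 * (ℓ : ℝ) * (Δ - 2 * δ' * e) ^ 2 / 2 := by
        rw [hK1eq]
        have hone : (1:ℝ) ^ 2 * (ℓ : ℝ) * (Δ - 2 * δ' * e) ^ 2 / 2
            = (ℓ : ℝ) * (Δ - 2 * δ' * e) ^ 2 / 2 := by ring
        rw [hone]
        linarith only [hkey, h7, h8, hlog2]
      linarith only [h5, h9]
    · have hK1ge2 : (2:ℝ) ≤ K1 := by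
        rw [hK1_def]
        have h10 : Nat.factorial 2 ≤ Nat.factorial m' := Nat.factorial_le (by omega)
        have h10' : (2:ℕ) ≤ Nat.factorial m' := by
          simpa [Nat.factorial] using h10
        exact_mod_cast h10'
      have hgap2 : Δ / 2 ≤ Δ - 2 * δ' * e := by linarith only [heΔ, hΔ]
      have hprod : 0 ≤ (K1 - 2) * ((Δ - 2 * δ' * e) - Δ / 2) :=
        mul_nonneg (by linarith only [hK1ge2]) (by linarith only [hgap2])
      have hprod2 : 0 ≤ (K1 - 2) * Δ :=
        mul_nonneg (by linarith only [hK1ge2]) hΔ.le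
      have ha : Δ ≤ K1 * (Δ - 2 * δ' * e) := by nlinarith only [hprod, hgap2, hprod2]
      have h11 : Δ ^ 2 ≤ K1 ^ 2 * (Δ - 2 * δ' * e) ^ 2 := by
        calc Δ ^ 2 ≤ (K1 * (Δ - 2 * δ' * e)) ^ 2 := pow_le_pow_left₀ hΔ.le ha 2
          _ = K1 ^ 2 * (Δ - 2 * δ' * e) ^ 2 := by ring
      have h12 := mul_le_mul_of_nonneg_left h11 hℓR.le
      have h13 : (ℓ : ℝ) * Δ ^ 2 / 2 ≤ K1 ^ 2 * (ℓ : ℝ) * (Δ - 2 * δ' * e) ^ 2 / 2 := by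
        linarith only [h12]
      linarith only [h5, h13, hlog2]
  have hfin : Real.exp (-(t' ^ 2 / (2 * (ℓ : ℝ) * cR ^ 2)))
      ≤ 2 * Real.exp (-(ℓ : ℝ) * Δ ^ 2 / 2) := by
    have h6 : -(t' ^ 2 / (2 * (ℓ : ℝ) * cR ^ 2)) ≤ Real.log 2 + -(ℓ : ℝ) * Δ ^ 2 / 2 := by
      have : -(ℓ : ℝ) * Δ ^ 2 / 2 = -((ℓ : ℝ) * Δ ^ 2 / 2) := by ring
      rw [this]
      linarith
    calc Real.exp (-(t' ^ 2 / (2 * (ℓ : ℝ) * cR ^ 2)))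
        ≤ Real.exp (Real.log 2 + -(ℓ : ℝ) * Δ ^ 2 / 2) := Real.exp_le_exp.2 h6
      _ = 2 * Real.exp (-(ℓ : ℝ) * Δ ^ 2 / 2) := by
          rw [Real.exp_add, Real.exp_log (by norm_num : (0:ℝ) < 2)]
  rw [← hbad_eq, div_le_iff₀ hKpos]
  calc (bad.card : ℝ)
      ≤ ((((Finset.univ : Finset (Fin n)).powersetCard ℓ).card : ℕ) : ℝ)
        * Real.exp (-(t' ^ 2 / (2 * (ℓ : ℝ) * cR ^ 2))) := hbadle
    _ ≤ ((((Finset.univ : Finset (Fin n)).powersetCard ℓ).card : ℕ) : ℝ)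
        * (2 * Real.exp (-(ℓ : ℝ) * Δ ^ 2 / 2)) :=
        mul_le_mul_of_nonneg_left hfin hKpos.le
    _ = 2 * Real.exp (-(ℓ : ℝ) * Δ ^ 2 / 2)
        * ((((Finset.univ : Finset (Fin n)).powersetCard ℓ).card : ℕ) : ℝ) := by ring
end

section
/- Let $1/n\ll\alpha,\beta$ and $m\le n^2$. Let $t\in\mathbb{N}$ and integers $n_1,\dots,n_t\ge\beta n$ with $\sum_{i=1}^t n_i=n$. Let $(H_1,\dots,H_m)$ be a collection of $k$-uniform hypergraphs on $[n]$, each with minimum $d$-degree at least $(\delta+\alpha)n^{k-d}$. Then there exists a partition of $[n]$ into sets $V_1,\dots,V_t$ with $|V_i|=n_i$ such that for every $d$-set $S\subseteq[n]$, every $i\in[t]$, and every $j\in[m]$, the number of $(k-d)$-subsets $W\subseteq V_i$ with $S\cup W\in E(H_j)$ is at least $(\delta+\alpha/2)n_i^{k-d}$. -/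
open Finset
set_option maxHeartbeats 1000000


-- A1
lemma aux_choose_le_pow (n r : ℕ) : n.choose r ≤ n ^ r := by
  induction r with
  | zero => simp
  | succ r ih =>
    have h1 : n.choose (r+1) ≤ n.choose (r+1) * (r+1) := Nat.le_mul_of_pos_right _ (Nat.succ_pos r)
    calc n.choose (r+1) ≤ n.choose (r+1) * (r+1) := h1
    _ = n.choose r * (n - r) := Nat.choose_succ_right_eq n r
    _ ≤ n ^ r * n := Nat.mul_le_mul ih (Nat.sub_le n r)
    _ = n ^ (r+1) := by ring

-- A2
lemma aux_count_inter {n : ℕ} (q j : ℕ) (A : Finset (Fin n)) (hj : j ≤ q) :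
    (((univ : Finset (Fin n)).powersetCard q).filter (fun V => (V ∩ A).card = j)).card
      = (A.card.choose j) * ((n - A.card).choose (q - j)) := by
  have hcompl : (Aᶜ).card = n - A.card := by
    rw [Finset.card_compl, Fintype.card_fin]
  rw [← hcompl, ← Finset.card_powersetCard j A, ← Finset.card_powersetCard (q - j) Aᶜ,
    ← Finset.card_product]
  apply Finset.card_bij' (fun V _ => (V ∩ A, V \ A)) (fun P _ => P.1 ∪ P.2)
  · intro V hV
    simp only [Finset.mem_filter, Finset.mem_powersetCard] at hV
    obtain ⟨⟨_, hcard⟩, hint⟩ := hV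
    simp only [Finset.mem_product, Finset.mem_powersetCard]
    refine ⟨⟨Finset.inter_subset_right, hint⟩, ⟨fun x hx => ?_, ?_⟩⟩
    · simp only [Finset.mem_sdiff] at hx
      simp [hx.2]
    · have := Finset.card_inter_add_card_sdiff V A
      omega
  · intro P hP
    simp only [Finset.mem_product, Finset.mem_powersetCard] at hP
    obtain ⟨⟨hP1, hc1⟩, hP2, hc2⟩ := hP
    have hdisj : Disjoint P.1 P.2 := by
      apply Finset.disjoint_left.mpr
      intro x hx1 hx2
      have := hP2 hx2
      simp only [Finset.mem_compl] at this
      exact this (hP1 hx1)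
    simp only [Finset.mem_filter, Finset.mem_powersetCard]
    constructor
    · exact ⟨Finset.subset_univ _, by rw [Finset.card_union_of_disjoint hdisj]; omega⟩
    · have h1 : (P.1 ∪ P.2) ∩ A = P.1 := by
        ext x
        simp only [Finset.mem_inter, Finset.mem_union]
        constructor
        · rintro ⟨hx | hx, hxA⟩
          · exact hx
          · exact absurd hxA (by simpa using hP2 hx)
        · intro hx; exact ⟨Or.inl hx, hP1 hx⟩
      rw [h1, hc1]
  · intro V hV
    simp only [Finset.mem_filter, Finset.mem_powersetCard] at hV
    ext x
    simp only [Finset.mem_union, Finset.mem_inter, Finset.mem_sdiff]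
    tauto
  · intro P hP
    simp only [Finset.mem_product, Finset.mem_powersetCard] at hP
    obtain ⟨⟨hP1, _⟩, hP2, _⟩ := hP
    have h1 : (P.1 ∪ P.2) ∩ A = P.1 := by
      ext x
      simp only [Finset.mem_inter, Finset.mem_union]
      constructor
      · rintro ⟨hx | hx, hxA⟩
        · exact hx
        · exact absurd hxA (by simpa using hP2 hx)
      · intro hx; exact ⟨Or.inl hx, hP1 hx⟩
    have h2 : (P.1 ∪ P.2) \ A = P.2 := by
      ext x
      simp only [Finset.mem_sdiff, Finset.mem_union]
      constructor
      · rintro ⟨hx | hx, hxA⟩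
        · exact absurd (hP1 hx) hxA
        · exact hx
      · intro hx
        refine ⟨Or.inr hx, ?_⟩
        simpa using hP2 hx
    rw [h1, h2]

-- A3 chain identity
lemma aux_chain_id (a b q j : ℕ) (hj : j + 1 ≤ q) :
    (a - j) * (q - j) * (a.choose j * b.choose (q - j))
      = (j + 1) * (b - (q - j - 1)) * (a.choose (j+1) * b.choose (q - j - 1)) := by
  have h1 : a.choose (j+1) * (j+1) = a.choose j * (a - j) := Nat.choose_succ_right_eq a j
  have h2 : b.choose (q - j) * (q - j) = b.choose (q - j - 1) * (b - (q - j - 1)) := by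
    have : q - j = (q - j - 1) + 1 := by omega
    conv_lhs => rw [this, Nat.choose_succ_right_eq b (q - j - 1)]
  calc (a - j) * (q - j) * (a.choose j * b.choose (q - j))
      = (a.choose j * (a - j)) * (b.choose (q-j) * (q - j)) := by ring
    _ = (a.choose (j+1) * (j+1)) * (b.choose (q-j-1) * (b - (q-j-1))) := by rw [h1, h2]
    _ = (j + 1) * (b - (q - j - 1)) * (a.choose (j+1) * b.choose (q - j - 1)) := by ring

-- key real inequality for the ratio of consecutive hypergeometric terms
lemma aux_key_ineq (η a q j n : ℝ) (hη0 : 0 < η) (hη1 : η ≤ 1) (hj0 : 0 ≤ j)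
    (hq0 : 0 < q) (hqn : q ≤ n) (ha0 : 0 ≤ a) (han : a ≤ n)
    (hjb : j ≤ q * a / n - η * q / 2) (hbig : 24 * n ≤ η ^ 2 * q ^ 2) :
    (1 + η / 16) * ((j + 1) * (n - a - q + j + 1)) ≤ (a - j) * (q - j) := by
  have hn0 : 0 < n := lt_of_lt_of_le hq0 hqn
  have hη2 : η ^ 2 ≤ 1 := by nlinarith
  have hq2 : η ^ 2 * q ^ 2 ≤ n ^ 2 := by nlinarith [sq_nonneg q]
  have hn24 : (24 : ℝ) ≤ n := by nlinarith
  set μ := q * a / n with hμ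
  have hμa : μ ≤ a := by
    rw [hμ, div_le_iff₀ hn0]
    nlinarith
  have hμq : μ ≤ q := by
    rw [hμ, div_le_iff₀ hn0]
    nlinarith
  have hμ0 : 0 ≤ μ := by positivity
  set x := η * q / 2 with hx
  have hx0 : 0 < x := by positivity
  set P := a * (n - q) / n with hP
  set Q := q * (n - a) / n with hQ
  set R := (n - a) * (n - q) / n with hR
  have hP0 : 0 ≤ P := by
    rw [hP]; apply div_nonneg (mul_nonneg ha0 (by linarith)) hn0.le
  have hQ0 : 0 ≤ Q := by
    rw [hQ]; apply div_nonneg (mul_nonneg hq0.le (by linarith)) hn0.le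
  have hR0 : 0 ≤ R := by
    rw [hR]; apply div_nonneg (mul_nonneg (by linarith) (by linarith)) hn0.le
  have haj : P + x ≤ a - j := by
    have : a - μ = P := by rw [hP, hμ]; field_simp
    linarith [hjb]
  have hqj : Q + x ≤ q - j := by
    have : q - μ = Q := by rw [hQ, hμ]; field_simp
    linarith [hjb]
  rcases le_or_gt (n - a - q + j + 1) 0 with hneg | hpos
  · -- second factor nonpositive
    have h1 : (1 + η / 16) * ((j + 1) * (n - a - q + j + 1)) ≤ 0 := by
      apply mul_nonpos_of_nonneg_of_nonpos (by linarith)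
      exact mul_nonpos_of_nonneg_of_nonpos (by linarith) hneg
    have h2 : 0 ≤ (a - j) * (q - j) := by
      apply mul_nonneg <;> linarith
    linarith
  · have hj1 : j + 1 ≤ μ + 1 := by linarith
    have hfac2 : n - a - q + j + 1 ≤ R + 1 := by
      have : n - a - q + μ = R := by rw [hR, hμ]; field_simp; ring
      linarith
    have hPQ : μ * R = P * Q := by rw [hP, hQ, hR, hμ]; ring
    have hLHS : (1 + η / 16) * ((j + 1) * (n - a - q + j + 1))
        ≤ (1 + η / 16) * ((μ + 1) * (R + 1)) := by
      apply mul_le_mul_of_nonneg_left _ (by linarith)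
      apply mul_le_mul hj1 hfac2 (le_of_lt hpos) (by linarith)
    have hRHS : (P + x) * (Q + x) ≤ (a - j) * (q - j) := by
      apply mul_le_mul haj hqj (by linarith) (by linarith)
    -- main estimate: (1+η/16) * ((μ+1)*(R+1)) ≤ (P+x)*(Q+x)
    have hQq : Q ≤ q := by rw [hQ]; rw [div_le_iff₀ hn0]; nlinarith
    have hRn : R ≤ n := by rw [hR]; rw [div_le_iff₀ hn0]; nlinarith
    have hPQle : P * Q ≤ q * P := by nlinarith
    have h1 : (η / 16) * (P * Q) ≤ x * P := by
      have : (η / 16) * (q * P) ≤ x * P := by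
        rw [hx]; nlinarith
      nlinarith
    have h2 : (1 + η / 16) * (μ + R + 1) ≤ x ^ 2 := by
      have hxx : η ^ 2 * q ^ 2 / 4 = x ^ 2 := by rw [hx]; ring
      have : (1 + η / 16) * (μ + R + 1) ≤ (17/16) * (3 * n) := by nlinarith
      nlinarith
    have main : (1 + η / 16) * ((μ + 1) * (R + 1)) ≤ (P + x) * (Q + x) := by
      have expand1 : (1 + η / 16) * ((μ + 1) * (R + 1))
          = (1 + η/16) * (μ * R) + (1 + η/16) * (μ + R + 1) := by ring
      have expand2 : (P + x) * (Q + x) = P * Q + x * Q + x * P + x ^ 2 := by ring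
      rw [expand1, expand2, hPQ]
      have : (1 + η/16) * (P * Q) = P * Q + (η/16) * (P * Q) := by ring
      nlinarith [mul_nonneg hx0.le hQ0]
    linarith

-- growth: exponential beats polynomial
lemma aux_growth (c γ : ℝ) (hc : 0 < c) (hγ : 0 < γ) (D : ℕ) :
    ∃ N₀ : ℕ, ∀ n : ℕ, N₀ ≤ n → ∀ m : ℕ, γ * n - 1 ≤ (m : ℝ) →
      ((n : ℝ) + 1) ^ (D + 1) ≤ (1 + c) ^ m := by
  have hr : 1 < 1 + c := by linarith
  have htend := tendsto_pow_const_div_const_pow_of_one_lt (D + 1) hr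
  have hε : (0 : ℝ) < (γ / 4) ^ (D + 1) := by positivity
  have hev : ∀ᶠ m : ℕ in Filter.atTop, (m : ℝ) ^ (D + 1) / (1 + c) ^ m < (γ / 4) ^ (D + 1) :=
    htend.eventually (gt_mem_nhds hε)
  obtain ⟨M₀, hM₀⟩ := Filter.eventually_atTop.mp hev
  refine ⟨max 1 (Nat.ceil ((2 * (M₀ + 1) + 2) / γ)), fun n hn m hm => ?_⟩
  have hn1 : 1 ≤ n := le_trans (le_max_left _ _) hn
  have hnγ : (2 * (M₀ + 1) + 2) / γ ≤ n := by
    calc (2 * (M₀ + 1) + 2) / γ ≤ (Nat.ceil ((2 * (M₀ + 1) + 2) / γ) : ℝ) := Nat.le_ceil _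
    _ ≤ n := by exact_mod_cast le_trans (le_max_right _ _) hn
  have hγn : 2 * ((M₀ : ℝ) + 1) + 2 ≤ γ * n := by
    rw [div_le_iff₀ hγ] at hnγ; linarith
  have hm2 : γ * n / 2 ≤ (m : ℝ) := by linarith
  have hmM₀ : M₀ ≤ m := by
    have : (M₀ : ℝ) ≤ m := by linarith
    exact_mod_cast this
  have hkey := hM₀ m hmM₀
  have hpow : (0 : ℝ) < (1 + c) ^ m := by positivity
  rw [div_lt_iff₀ hpow] at hkey
  have h2n : ((n : ℝ) + 1) ^ (D + 1) ≤ (2 * n) ^ (D + 1) := by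
    apply pow_le_pow_left₀ (by positivity)
    have : (1 : ℝ) ≤ n := by exact_mod_cast hn1
    linarith
  have h4m : (2 * (n : ℝ)) ^ (D + 1) ≤ (4 * m / γ) ^ (D + 1) := by
    apply pow_le_pow_left₀ (by positivity)
    rw [le_div_iff₀ hγ]
    nlinarith
  have heq : (4 * (m : ℝ) / γ) ^ (D + 1) * (γ / 4) ^ (D + 1) = (m : ℝ) ^ (D + 1) := by
    rw [← mul_pow]
    congr 1
    field_simp
  have : (4 * (m : ℝ) / γ) ^ (D + 1) ≤ (1 + c) ^ m := by
    by_contra hcon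
    push_neg at hcon
    have h0 : (0:ℝ) < (γ/4) ^ (D+1) := hε
    nlinarith [hkey]
  linarith

-- single chain step
lemma aux_chain_one {n : ℕ} (q : ℕ) (A : Finset (Fin n)) (η : ℝ)
    (hη0 : 0 < η) (hη1 : η ≤ 1) (hqn : q ≤ n) (hn0 : 0 < n)
    (hbig : 24 * (n : ℝ) ≤ η ^ 2 * q ^ 2) (j : ℕ)
    (hj : (j : ℝ) ≤ q * A.card / n - η * q / 2) :
    (1 + η / 16) * ((A.card.choose j * (n - A.card).choose (q - j) : ℕ) : ℝ)
      ≤ ((A.card.choose (j+1) * (n - A.card).choose (q - (j+1)) : ℕ) : ℝ) := by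
  set a := A.card with ha
  have han : a ≤ n := by rw [ha]; simpa using Finset.card_le_card (A.subset_univ)
  have hq0 : 0 < q := by
    rcases Nat.eq_zero_or_pos q with h | h
    · exfalso
      have hnR : (0:ℝ) < n := by exact_mod_cast hn0
      subst h; push_cast at hbig; nlinarith
    · exact h
  have hηq : (24 : ℝ) ≤ η * q := by
    have h1 : η ^ 2 * q ^ 2 ≤ η * q * q := by
      have : (q:ℝ) ≥ 0 := by positivity
      nlinarith
    have h2 : (24 :ℝ) * q ≤ 24 * n := by
      have : (q:ℝ) ≤ n := by exact_mod_cast hqn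
      linarith
    have hq0' : (0:ℝ) < q := by exact_mod_cast hq0
    nlinarith
  -- j+1 ≤ q and j+1 ≤ a as naturals
  have hμq : (q : ℝ) * a / n ≤ q := by
    rw [div_le_iff₀ (by exact_mod_cast hn0)]
    have h1 : (a:ℝ) ≤ n := by exact_mod_cast han
    have : (0:ℝ) ≤ q := by positivity
    nlinarith
  have hμa : (q : ℝ) * a / n ≤ a := by
    rw [div_le_iff₀ (by exact_mod_cast hn0)]
    have h1 : (q:ℝ) ≤ n := by exact_mod_cast hqn
    have : (0:ℝ) ≤ a := by positivity
    nlinarith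
  have hjq : j + 1 ≤ q := by
    have : (j : ℝ) ≤ q - 12 := by nlinarith
    have : (j : ℝ) + 1 ≤ q := by linarith
    exact_mod_cast this
  have hja : j + 1 ≤ a := by
    have : (j : ℝ) ≤ a - 12 := by nlinarith
    have : (j : ℝ) + 1 ≤ a := by linarith
    exact_mod_cast this
  set b := n - a with hb
  rcases le_or_gt (q - j - 1) b with hcase | hcase
  · -- main case
    have hid := aux_chain_id a b q j hjq
    -- cast the identity to ℝ
    have hidR : ((a - j : ℕ) : ℝ) * ((q - j : ℕ) : ℝ)
        * ((a.choose j * b.choose (q - j) : ℕ) : ℝ)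
        = ((j + 1 : ℕ) : ℝ) * ((b - (q - j - 1) : ℕ) : ℝ)
        * ((a.choose (j+1) * b.choose (q - j - 1) : ℕ) : ℝ) := by
      exact_mod_cast congrArg (Nat.cast : ℕ → ℝ) hid
    have hcast1 : ((a - j : ℕ) : ℝ) = (a : ℝ) - j := by
      have : j ≤ a := by omega
      push_cast [this]; ring
    have hcast2 : ((q - j : ℕ) : ℝ) = (q : ℝ) - j := by
      have : j ≤ q := by omega
      push_cast [this]; ring
    have hcast3 : ((b - (q - j - 1) : ℕ) : ℝ) = (n : ℝ) - a - q + j + 1 := by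
      have e1 : ((b - (q - j - 1) : ℕ) : ℝ) = (b:ℝ) - ((q - j - 1 : ℕ):ℝ) :=
        Nat.cast_sub hcase
      have e2 : ((b : ℕ):ℝ) = (n:ℝ) - a := by rw [hb]; exact Nat.cast_sub han
      have e3 : ((q - j - 1 : ℕ):ℝ) = (q:ℝ) - j - 1 := by
        rw [show q - j - 1 = q - (j+1) by omega, Nat.cast_sub hjq]
        push_cast; ring
      rw [e1, e2, e3]; ring
    have hkey := aux_key_ineq η a q j n hη0 hη1 (by positivity)
      (by exact_mod_cast hq0) (by exact_mod_cast hqn) (by positivity)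
      (by exact_mod_cast han) hj hbig
    -- conclude
    have hX0 : (0:ℝ) < ((a : ℝ) - j) * ((q:ℝ) - j) := by
      have h1 : (j:ℝ) + 1 ≤ a := by exact_mod_cast hja
      have h2 : (j:ℝ) + 1 ≤ q := by exact_mod_cast hjq
      nlinarith
    have hN1 : (0:ℝ) ≤ ((a.choose (j+1) * b.choose (q - j - 1) : ℕ) : ℝ) := by positivity
    have hq1 : q - (j+1) = q - j - 1 := by omega
    rw [hq1]
    rw [hcast1, hcast2, hcast3] at hidR
    have hYnn : (0:ℝ) ≤ ((j:ℝ) + 1) * ((n:ℝ) - a - q + j + 1) := by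
      rcases le_or_gt 0 ((n:ℝ) - a - q + j + 1) with h | h
      · positivity
      · exfalso
        have : ((b - (q - j - 1) : ℕ) : ℝ) ≥ 0 := by positivity
        rw [hcast3] at this; linarith
    -- (1+η/16) * Nj ≤ Nj' : from X * Nj = Y * Nj', (1+η/16) Y ≤ X
    have hNj0 : (0:ℝ) ≤ ((a.choose j * b.choose (q - j) : ℕ) : ℝ) := by positivity
    set Nj : ℝ := ((a.choose j * b.choose (q - j) : ℕ) : ℝ) with hNjdef
    set Nj' : ℝ := ((a.choose (j+1) * b.choose (q - j - 1) : ℕ) : ℝ) with hNj'def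
    set Y : ℝ := ((j:ℝ) + 1) * ((n:ℝ) - a - q + j + 1) with hYdef
    have hidR2 : ((a:ℝ) - j) * ((q:ℝ) - j) * Nj = Y * Nj' := by
      rw [hidR]; push_cast; ring
    rcases hYnn.eq_or_lt with hY0 | hYpos
    · have hNjz : Nj = 0 := by
        have h0 : ((a:ℝ) - j) * ((q:ℝ) - j) * Nj = 0 := by rw [hidR2, ← hY0]; ring
        rcases mul_eq_zero.mp h0 with h | h
        · exact absurd h (ne_of_gt hX0)
        · exact h
      rw [hNjz, mul_zero]
      positivity
    · have h1 : (1 + η/16) * Y * Nj ≤ ((a:ℝ) - j) * ((q:ℝ) - j) * Nj :=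
        mul_le_mul_of_nonneg_right hkey hNj0
      rw [hidR2] at h1
      have h2 : Y * ((1 + η/16) * Nj) ≤ Y * Nj' := by linarith
      exact (mul_le_mul_iff_of_pos_left hYpos).mp h2
  · -- degenerate: q - j > b + 1, so both choose terms vanish
    have h1 : b.choose (q - j) = 0 := Nat.choose_eq_zero_of_lt (by omega)
    have h2 : b.choose (q - (j+1)) = 0 := Nat.choose_eq_zero_of_lt (by omega)
    rw [h1, h2]
    simp

lemma aux_chain_iter {n : ℕ} (q : ℕ) (A : Finset (Fin n)) (η : ℝ)
    (hη0 : 0 < η) (hη1 : η ≤ 1) (hqn : q ≤ n) (hn0 : 0 < n)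
    (hbig : 24 * (n : ℝ) ≤ η ^ 2 * q ^ 2) (j : ℕ)
    (hj : (j : ℝ) ≤ q * A.card / n - η * q) :
    ∀ l : ℕ, (l : ℝ) ≤ η * q / 2 →
      (1 + η / 16) ^ l * ((A.card.choose j * (n - A.card).choose (q - j) : ℕ) : ℝ)
        ≤ ((A.card.choose (j + l) * (n - A.card).choose (q - (j + l)) : ℕ) : ℝ) := by
  intro l
  induction l with
  | zero => intro _; simp
  | succ l ih =>
    intro hl
    have hl' : (l : ℝ) ≤ η * q / 2 := by push_cast at hl ⊢; linarith
    have hql : (0:ℝ) ≤ η * q := by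
      have : (0:ℝ) ≤ (l:ℝ) + 1 := by positivity
      push_cast at hl; nlinarith [hl]
    have hstep := aux_chain_one q A η hη0 hη1 hqn hn0 hbig (j + l) (by
      push_cast
      push_cast at hl
      linarith)
    have hnn : (0:ℝ) ≤ (1 + η/16) := by linarith
    calc (1 + η / 16) ^ (l+1) * ((A.card.choose j * (n - A.card).choose (q - j) : ℕ) : ℝ)
        = (1 + η/16) * ((1 + η / 16) ^ l
            * ((A.card.choose j * (n - A.card).choose (q - j) : ℕ) : ℝ)) := by ring
      _ ≤ (1 + η/16) * ((A.card.choose (j + l) * (n - A.card).choose (q - (j + l)) : ℕ) : ℝ) :=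
          mul_le_mul_of_nonneg_left (ih hl') hnn
      _ ≤ ((A.card.choose (j + l + 1) * (n - A.card).choose (q - (j + l + 1)) : ℕ) : ℝ) := by
          have := hstep
          convert this using 3 <;> omega

lemma aux_Nj_le {n : ℕ} (q j : ℕ) (A : Finset (Fin n)) (hj : j ≤ q) :
    A.card.choose j * (n - A.card).choose (q - j) ≤ n.choose q := by
  rw [← aux_count_inter q j A hj]
  calc (((univ : Finset (Fin n)).powersetCard q).filter (fun V => (V ∩ A).card = j)).card
      ≤ ((univ : Finset (Fin n)).powersetCard q).card := Finset.card_filter_le _ _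
    _ = n.choose q := by rw [Finset.card_powersetCard, Finset.card_univ, Fintype.card_fin]

/-- Hypergeometric lower-tail bound, counting form. -/
lemma aux_HG (η β : ℝ) (hη0 : 0 < η) (hη1 : η ≤ 1) (hβ0 : 0 < β) (hβ1 : β ≤ 1) (D : ℕ) :
    ∃ N₀ : ℕ, 0 < N₀ ∧ ∀ n : ℕ, N₀ ≤ n → ∀ q : ℕ, q ≤ n → β * n ≤ (q : ℝ) →
      ∀ A : Finset (Fin n),
      ((((univ : Finset (Fin n)).powersetCard q).filter
          (fun V => ((V ∩ A).card : ℝ) < (q : ℝ) * A.card / n - η * q)).card) * n ^ D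
        ≤ n.choose q := by
  obtain ⟨N₁, hN₁⟩ := aux_growth (η/16) (η * β / 4) (by linarith) (by positivity) D
  refine ⟨max (max N₁ 1) (Nat.ceil (25 / (η^2 * β^2))), by positivity, fun n hn q hqn hβq A => ?_⟩
  have hn1 : 1 ≤ n := le_trans (le_trans (le_max_right _ _) (le_max_left _ _)) hn
  have hnR : (0:ℝ) < n := by exact_mod_cast hn1
  have hq0 : (0:ℝ) < q := lt_of_lt_of_le (by positivity) hβq
  have hq1 : 1 ≤ q := by exact_mod_cast Nat.one_le_iff_ne_zero.mpr (by
    intro h; rw [h] at hq0; simp at hq0)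
  have hbign : 25 / (η^2 * β^2) ≤ (n:ℝ) := by
    calc 25 / (η^2 * β^2) ≤ (Nat.ceil (25 / (η^2 * β^2)) : ℝ) := Nat.le_ceil _
    _ ≤ n := by exact_mod_cast le_trans (le_max_right _ _) hn
  have hbig : 24 * (n : ℝ) ≤ η ^ 2 * q ^ 2 := by
    have h1 : η^2 * β^2 * n ≥ 25 := by
      rw [ge_iff_le, ← div_le_iff₀' (by positivity)]
      exact hbign
    have h2 : η^2 * q^2 ≥ η^2 * (β^2 * n^2) := by
      have hle : β * n ≤ q := hβq
      have hb : (0:ℝ) ≤ β * n := by positivity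
      have hsq : (β*n)^2 ≤ (q:ℝ)^2 := by nlinarith
      nlinarith [sq_nonneg η, hsq]
    nlinarith [sq_nonneg ((n:ℝ) - 1), hnR]
  have hηq24 : (24:ℝ) ≤ η * q := by
    have h1 : η ^ 2 * q ^ 2 ≤ η * q * q := by nlinarith
    have h2 : (24 :ℝ) * q ≤ 24 * n := by
      have : (q:ℝ) ≤ n := by exact_mod_cast hqn
      linarith
    nlinarith
  set a := A.card with ha
  set M := Nat.floor (η * q / 4) with hM
  have hM1 : (M : ℝ) ≤ η * q / 4 := Nat.floor_le (by positivity)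
  have hM2 : η * q / 4 - 1 ≤ (M:ℝ) := by
    have := Nat.lt_floor_add_one (η * q / 4)
    linarith
  -- growth bound: (n+1)^(D+1) ≤ (1+η/16)^M
  have hgrow : ((n:ℝ) + 1) ^ (D+1) ≤ (1 + η/16) ^ M := by
    apply hN₁ n (le_trans (le_trans (le_max_left _ _) (le_max_left _ _)) hn)
    calc η * β / 4 * n - 1 ≤ η * q / 4 - 1 := by nlinarith
    _ ≤ (M:ℝ) := hM2
  -- decompose bad count fiberwise over j = |V ∩ A|
  set bad := (((univ : Finset (Fin n)).powersetCard q).filter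
      (fun V => ((V ∩ A).card : ℝ) < (q : ℝ) * A.card / n - η * q)) with hbad
  have hfib : bad.card = ∑ j ∈ Finset.range (q+1),
      (bad.filter (fun V => (V ∩ A).card = j)).card := by
    apply Finset.card_eq_sum_card_fiberwise
    intro V hV
    rw [Finset.mem_coe, hbad, Finset.mem_filter, Finset.mem_powersetCard] at hV
    simp only [Finset.mem_coe, Finset.mem_range]
    have : (V ∩ A).card ≤ V.card := Finset.card_le_card Finset.inter_subset_left
    omega
  -- bound each fiber
  have hfibbound : ∀ j ∈ Finset.range (q+1),
      ((bad.filter (fun V => (V ∩ A).card = j)).card : ℝ) * (1 + η/16)^M ≤ n.choose q := by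
    intro j hj
    rw [Finset.mem_range] at hj
    rcases le_or_gt ((q : ℝ) * A.card / n - η * q) (j : ℝ) with hcond | hcond
    · -- fiber empty
      have : bad.filter (fun V => (V ∩ A).card = j) = ∅ := by
        rw [Finset.eq_empty_iff_forall_notMem]
        intro V hV
        rw [Finset.mem_filter, hbad, Finset.mem_filter] at hV
        have h1 := hV.1.2
        have h2 := hV.2
        rw [h2] at h1
        linarith
      rw [this]
      simp only [Finset.card_empty, Nat.cast_zero, zero_mul]
      positivity
    · -- apply the chain
      have hjcond : (j:ℝ) ≤ (q:ℝ) * a / n - η * q := le_of_lt hcond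
      have hfle : (bad.filter (fun V => (V ∩ A).card = j)).card
          ≤ a.choose j * (n - a).choose (q - j) := by
        rw [← aux_count_inter q j A (by omega : j ≤ q)]
        apply Finset.card_le_card
        intro V hV
        rw [Finset.mem_filter] at hV ⊢
        rw [hbad, Finset.mem_filter] at hV
        exact ⟨hV.1.1, hV.2⟩
      have hchain := aux_chain_iter q A η hη0 hη1 hqn (by omega) hbig j hjcond M
        (by linarith)
      have hNjM : a.choose (j+M) * (n - a).choose (q - (j+M)) ≤ n.choose q := by
        apply aux_Nj_le
        have hja : (j:ℝ) + (M:ℝ) ≤ q := by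
          have hμq : (q : ℝ) * a / n ≤ q := by
            rw [div_le_iff₀ hnR]
            have h1 : (a:ℝ) ≤ n := by
              rw [ha]; exact_mod_cast Finset.card_le_card (A.subset_univ) |>.trans
                (by simp)
            nlinarith
          linarith
        have : ((j + M : ℕ):ℝ) ≤ (q:ℝ) := by push_cast; linarith
        exact_mod_cast this
      calc ((bad.filter (fun V => (V ∩ A).card = j)).card : ℝ) * (1 + η/16)^M
          ≤ ((a.choose j * (n - a).choose (q - j) : ℕ) : ℝ) * (1 + η/16)^M := by
            apply mul_le_mul_of_nonneg_right _ (by positivity)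
            exact_mod_cast hfle
        _ = (1 + η/16)^M * ((a.choose j * (n - a).choose (q - j) : ℕ) : ℝ) := by ring
        _ ≤ ((a.choose (j+M) * (n - a).choose (q - (j+M)) : ℕ) : ℝ) := hchain
        _ ≤ n.choose q := by exact_mod_cast hNjM
  -- combine
  have hsum : (bad.card : ℝ) * (1 + η/16)^M ≤ (q+1) * n.choose q := by
    rw [hfib]
    push_cast
    rw [Finset.sum_mul]
    calc ∑ j ∈ Finset.range (q+1),
          ((bad.filter (fun V => (V ∩ A).card = j)).card : ℝ) * (1 + η/16)^M
        ≤ ∑ j ∈ Finset.range (q+1), (n.choose q : ℝ) := by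
          apply Finset.sum_le_sum
          intro j hj
          exact hfibbound j hj
      _ = (q+1) * n.choose q := by
          rw [Finset.sum_const, Finset.card_range]
          push_cast; ring
  -- final: bad.card * n^D ≤ choose, since (q+1) * n^D ≤ (1+η/16)^M
  have hpoly : ((q:ℝ)+1) * n^D ≤ (1 + η/16)^M := by
    calc ((q:ℝ)+1) * n^D ≤ ((n:ℝ)+1) * ((n:ℝ)+1)^D := by
          apply mul_le_mul
          · have : (q:ℝ) ≤ n := by exact_mod_cast hqn
            linarith
          · apply pow_le_pow_left₀ (by positivity); linarith
          · positivity
          · positivity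
      _ = ((n:ℝ)+1)^(D+1) := by ring
      _ ≤ (1 + η/16)^M := hgrow
  have hfinal : (bad.card : ℝ) * n^D ≤ n.choose q := by
    have hb0 : (0:ℝ) ≤ (bad.card : ℝ) := by positivity
    have hch0 : (0:ℝ) < n.choose q := by exact_mod_cast Nat.choose_pos hqn
    have hpM : (0:ℝ) < (1 + η/16)^M := by positivity
    -- bad.card ≤ (q+1) choose / r^M ; bad.card * n^D ≤ (q+1) n^D choose / r^M ≤ choose
    have h1 : (bad.card : ℝ) * n^D * (1 + η/16)^M ≤ (q+1) * n^D * n.choose q := by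
      calc (bad.card : ℝ) * n^D * (1 + η/16)^M
          = ((bad.card : ℝ) * (1 + η/16)^M) * n^D := by ring
        _ ≤ ((q:ℝ)+1) * n.choose q * n^D := by
            apply mul_le_mul_of_nonneg_right hsum (by positivity)
        _ = ((q:ℝ)+1) * n^D * n.choose q := by ring
    have h2 : ((q:ℝ)+1) * n^D * n.choose q ≤ (1 + η/16)^M * n.choose q :=
      mul_le_mul_of_nonneg_right hpoly hch0.le
    have h3 : (bad.card : ℝ) * n^D * (1 + η/16)^M ≤ (1 + η/16)^M * n.choose q := by linarith
    nlinarith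
  exact_mod_cast hfinal

lemma aux_exists_partition {γ : Type*} [DecidableEq γ] :
    ∀ (t : ℕ) (s : Finset γ) (ns : Fin t → ℕ), s.card = ∑ i, ns i →
    ∃ V : Fin t → Finset γ, (∀ i, V i ⊆ s) ∧ (∀ i, (V i).card = ns i) ∧
      (∀ x ∈ s, ∃ i, x ∈ V i) ∧ ∀ i j, i ≠ j → Disjoint (V i) (V j) := by
  intro t
  induction t with
  | zero =>
    intro s ns hcard
    refine ⟨fun i => ∅, fun i => i.elim0, fun i => i.elim0, fun x hx => ?_, fun i => i.elim0⟩
    simp only [Finset.sum_empty, Finset.univ_eq_empty] at hcard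
    rw [Finset.card_eq_zero] at hcard
    subst hcard
    simp at hx
  | succ t ih =>
    intro s ns hcard
    have h0 : ns 0 ≤ s.card := by
      rw [hcard, Fin.sum_univ_succ]; omega
    obtain ⟨s0, hs0sub, hs0card⟩ := Finset.exists_subset_card_eq h0
    have hrest : (s \ s0).card = ∑ i : Fin t, ns i.succ := by
      rw [Finset.card_sdiff_of_subset hs0sub, hs0card, hcard, Fin.sum_univ_succ]
      omega
    obtain ⟨V', hV'sub, hV'card, hV'cov, hV'disj⟩ := ih (s \ s0) (fun i => ns i.succ) hrest
    refine ⟨Fin.cases s0 V', ?_, ?_, ?_, ?_⟩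
    · intro i
      refine Fin.cases ?_ ?_ i
      · simpa using hs0sub
      · intro j
        simp only [Fin.cases_succ]
        exact (hV'sub j).trans (Finset.sdiff_subset)
    · intro i
      refine Fin.cases ?_ ?_ i
      · simpa using hs0card
      · intro j
        simpa using hV'card j
    · intro x hx
      by_cases hx0 : x ∈ s0
      · exact ⟨0, by simpa using hx0⟩
      · obtain ⟨j, hj⟩ := hV'cov x (Finset.mem_sdiff.mpr ⟨hx, hx0⟩)
        exact ⟨j.succ, by simpa using hj⟩
    · intro i j hij
      rcases Fin.eq_zero_or_eq_succ i with rfl | ⟨i', rfl⟩ <;>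
        rcases Fin.eq_zero_or_eq_succ j with rfl | ⟨j', rfl⟩
      · exact absurd rfl hij
      · simp only [Fin.cases_zero, Fin.cases_succ]
        exact Finset.disjoint_sdiff.mono_right (hV'sub j')
      · simp only [Fin.cases_zero, Fin.cases_succ]
        exact (Finset.disjoint_sdiff.mono_right (hV'sub i')).symm
      · simp only [Fin.cases_succ]
        exact hV'disj i' j' (fun h => hij (by rw [h]))

lemma aux_perm_of_card_eq {n : ℕ} (V V' : Finset (Fin n)) (hcard : V.card = V'.card) :
    ∃ σ : Equiv.Perm (Fin n), V.image σ = V' := by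
  have h1 : Fintype.card {x // x ∈ V} = Fintype.card {x // x ∈ V'} := by
    simp [Fintype.card_coe, hcard]
  have h2 : Fintype.card {x // ¬ x ∈ V} = Fintype.card {x // ¬ x ∈ V'} := by
    rw [Fintype.card_subtype_compl, Fintype.card_subtype_compl]
    simp [Fintype.card_coe, hcard]
  set ep := Fintype.equivOfCardEq h1 with hep
  set en := Fintype.equivOfCardEq h2 with hen
  refine ⟨Equiv.subtypeCongr ep en, ?_⟩
  apply Finset.eq_of_subset_of_card_le
  · intro x hx
    rw [Finset.mem_image] at hx
    obtain ⟨v, hv, rfl⟩ := hx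
    have happ : Equiv.subtypeCongr ep en v = (ep ⟨v, hv⟩ : {x // x ∈ V'}) := by
      simp [Equiv.subtypeCongr, hv]
    rw [happ]
    exact (ep ⟨v, hv⟩).2
  · rw [Finset.card_image_of_injective _ (Equiv.injective _), hcard]

/-- The space of ordered partitions of `Fin n` with part sizes `ns`. -/
def auxOmega (n t : ℕ) (ns : Fin t → ℕ) : Finset (Fin t → Finset (Fin n)) :=
  Finset.univ.filter (fun V => (∀ i, (V i).card = ns i) ∧ (∀ v, ∃ i, v ∈ V i) ∧
    (∀ i j, i ≠ j → Disjoint (V i) (V j)))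

lemma aux_omega_image {n t : ℕ} (ns : Fin t → ℕ) (τ : Equiv.Perm (Fin n))
    (c : Fin t → Finset (Fin n)) (hc : c ∈ auxOmega n t ns) :
    (fun idx => (c idx).image τ) ∈ auxOmega n t ns := by
  rw [auxOmega, Finset.mem_filter] at hc ⊢
  obtain ⟨-, hcard, hcov, hdisj⟩ := hc
  refine ⟨Finset.mem_univ _, fun i => ?_, fun v => ?_, fun i j hij => ?_⟩
  · rw [Finset.card_image_of_injective _ (Equiv.injective τ)]
    exact hcard i
  · obtain ⟨i, hi⟩ := hcov (τ.symm v)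
    exact ⟨i, Finset.mem_image.mpr ⟨τ.symm v, hi, by simp⟩⟩
  · exact (Finset.disjoint_image (Equiv.injective τ)).mpr (hdisj i j hij)

lemma aux_transport {n t : ℕ} (ns : Fin t → ℕ) (i₀ : Fin t) (V V' : Finset (Fin n))
    (hcard : V.card = V'.card) :
    ((auxOmega n t ns).filter (fun c => c i₀ = V)).card
      = ((auxOmega n t ns).filter (fun c => c i₀ = V')).card := by
  obtain ⟨σ, himg⟩ := aux_perm_of_card_eq V V' hcard
  have himg' : V'.image σ.symm = V := by
    rw [← himg, Finset.image_image]
    simp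
  apply Finset.card_nbij' (i := fun c => fun idx => (c idx).image σ)
    (j := fun c => fun idx => (c idx).image σ.symm)
  · intro c hc
    rw [Finset.mem_coe, Finset.mem_filter] at hc ⊢
    refine ⟨aux_omega_image ns σ c hc.1, ?_⟩
    show (c i₀).image σ = V'
    rw [hc.2, himg]
  · intro c hc
    rw [Finset.mem_coe, Finset.mem_filter] at hc ⊢
    refine ⟨aux_omega_image ns σ.symm c hc.1, ?_⟩
    show (c i₀).image σ.symm = V
    rw [hc.2, himg']
  · intro c _
    funext idx
    beta_reduce; rw [Finset.image_image]
    simp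
  · intro c _
    funext idx
    beta_reduce; rw [Finset.image_image]
    simp

lemma aux_count_main {n t : ℕ} (ns : Fin t → ℕ) (i₀ : Fin t)
    (P : Finset (Fin n) → Prop) [DecidablePred P] :
    ((auxOmega n t ns).filter (fun c => P (c i₀))).card * (n.choose (ns i₀))
      = (((univ : Finset (Fin n)).powersetCard (ns i₀)).filter P).card
          * (auxOmega n t ns).card := by
  set Ω := auxOmega n t ns with hΩ
  set pcs := (univ : Finset (Fin n)).powersetCard (ns i₀) with hpcs
  have hmem : ∀ c ∈ Ω, c i₀ ∈ pcs := by
    intro c hc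
    rw [hΩ, auxOmega, Finset.mem_filter] at hc
    rw [hpcs, Finset.mem_powersetCard]
    exact ⟨Finset.subset_univ _, hc.2.1 i₀⟩
  have h1 : (Ω.filter (fun c => P (c i₀))).card
      = ∑ V ∈ pcs.filter P, (Ω.filter (fun c => c i₀ = V)).card := by
    rw [Finset.card_eq_sum_card_fiberwise (f := fun c => c i₀)
      (t := pcs.filter P) (by
        intro c hc
        rw [Finset.mem_coe, Finset.mem_filter] at hc
        exact Finset.mem_filter.mpr ⟨hmem c hc.1, hc.2⟩)]
    apply Finset.sum_congr rfl
    intro V hV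
    congr 1
    ext c
    simp only [Finset.mem_filter] at hV ⊢
    constructor
    · rintro ⟨⟨hc, _⟩, h2⟩; exact ⟨hc, h2⟩
    · rintro ⟨hc, h2⟩; exact ⟨⟨hc, h2 ▸ hV.2⟩, h2⟩
  have h2 : Ω.card = ∑ V ∈ pcs, (Ω.filter (fun c => c i₀ = V)).card :=
    Finset.card_eq_sum_card_fiberwise hmem
  have hchoose : n.choose (ns i₀) = ∑ _V ∈ pcs, 1 := by
    rw [Finset.sum_const, smul_eq_mul, mul_one, hpcs, Finset.card_powersetCard,
      Finset.card_univ, Fintype.card_fin]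
  have hPcard : (pcs.filter P).card = ∑ _V ∈ pcs.filter P, 1 := by
    rw [Finset.sum_const, smul_eq_mul, mul_one]
  rw [h1, h2, hchoose, hPcard, Finset.sum_mul_sum, Finset.sum_mul_sum]
  apply Finset.sum_congr rfl
  intro V hV
  apply Finset.sum_congr rfl
  intro V' hV'
  rw [mul_one, one_mul]
  apply aux_transport
  rw [Finset.mem_powersetCard] at hV'
  rw [Finset.mem_filter, Finset.mem_powersetCard] at hV
  rw [hV.1.2, hV'.2]

lemma aux_double_count {n k : ℕ} (G : Finset (Finset (Fin n))) (hG : ∀ e ∈ G, e.card = k)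
    (U : Finset (Fin n)) (e : ℕ) (T : Finset (Fin n)) (hT : T.card + (e+1) = k) :
    ∑ v ∈ U, ((U.powersetCard e).filter (fun W => insert v T ∪ W ∈ G)).card
      = (e+1) * ((U.powersetCard (e+1)).filter (fun W => T ∪ W ∈ G)).card := by
  have keyfact : ∀ (v : Fin n) (W' : Finset (Fin n)), W'.card = e → insert v T ∪ W' ∈ G →
      v ∉ T ∪ W' := by
    intro v W' hW' hmem hvin
    have h1 : insert v T ∪ W' = insert v (T ∪ W') := by
      rw [Finset.insert_union]
    have h2 : insert v (T ∪ W') = T ∪ W' := Finset.insert_eq_self.mpr hvin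
    have h3 : (T ∪ W').card = k := by
      rw [← h2, ← h1]; exact hG _ hmem
    have h4 : (T ∪ W').card ≤ T.card + W'.card := Finset.card_union_le _ _
    omega
  rw [← Finset.card_sigma]
  have rhs_eq : (e+1) * ((U.powersetCard (e+1)).filter (fun W => T ∪ W ∈ G)).card
      = (((U.powersetCard (e+1)).filter (fun W => T ∪ W ∈ G)).sigma (fun W => W)).card := by
    rw [Finset.card_sigma]
    have hall : ∀ W ∈ (U.powersetCard (e+1)).filter (fun W => T ∪ W ∈ G), W.card = e+1 := by
      intro W hW
      rw [Finset.mem_filter, Finset.mem_powersetCard] at hW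
      exact hW.1.2
    rw [Finset.sum_congr rfl hall, Finset.sum_const, smul_eq_mul, mul_comm]
  rw [rhs_eq]
  apply Finset.card_nbij' (i := fun p => ⟨insert p.1 p.2, p.1⟩)
    (j := fun p => ⟨p.2, p.1.erase p.2⟩)
  · rintro ⟨v, W'⟩ hp
    rw [Finset.mem_coe, Finset.mem_sigma] at hp
    obtain ⟨hv, hW'⟩ := hp
    rw [Finset.mem_filter, Finset.mem_powersetCard] at hW'
    obtain ⟨⟨hsub, hcard⟩, hmem⟩ := hW'
    have hnotin := keyfact v W' hcard hmem
    rw [Finset.mem_union] at hnotin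
    push_neg at hnotin
    rw [Finset.mem_coe, Finset.mem_sigma]
    constructor
    · rw [Finset.mem_filter, Finset.mem_powersetCard]
      refine ⟨⟨Finset.insert_subset hv hsub, ?_⟩, ?_⟩
      · rw [Finset.card_insert_of_notMem hnotin.2, hcard]
      · have : T ∪ insert v W' = insert v T ∪ W' := by
          rw [Finset.union_insert, Finset.insert_union]
        rw [this]; exact hmem
    · exact Finset.mem_insert_self _ _
  · rintro ⟨W, v⟩ hp
    rw [Finset.mem_coe, Finset.mem_sigma, Finset.mem_filter, Finset.mem_powersetCard] at hp
    obtain ⟨⟨⟨hsub, hcard⟩, hmem⟩, hv⟩ := hp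
    rw [Finset.mem_coe, Finset.mem_sigma]
    constructor
    · exact hsub hv
    · rw [Finset.mem_filter, Finset.mem_powersetCard]
      refine ⟨⟨(Finset.erase_subset _ _).trans hsub, ?_⟩, ?_⟩
      · rw [Finset.card_erase_of_mem hv, hcard]; omega
      · have : insert v T ∪ W.erase v = T ∪ insert v (W.erase v) := by
          rw [Finset.union_insert, Finset.insert_union]
        rw [this, Finset.insert_erase hv]
        exact hmem
  · rintro ⟨v, W'⟩ hp
    rw [Finset.mem_coe, Finset.mem_sigma] at hp
    obtain ⟨hv, hW'⟩ := hp
    rw [Finset.mem_filter, Finset.mem_powersetCard] at hW'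
    obtain ⟨⟨hsub, hcard⟩, hmem⟩ := hW'
    have hnotin := keyfact v W' hcard hmem
    rw [Finset.mem_union] at hnotin
    push_neg at hnotin
    simp only
    congr 1
    exact Finset.erase_insert hnotin.2
  · rintro ⟨W, v⟩ hp
    rw [Finset.mem_coe, Finset.mem_sigma, Finset.mem_filter, Finset.mem_powersetCard] at hp
    obtain ⟨⟨⟨hsub, hcard⟩, hmem⟩, hv⟩ := hp
    simp only
    have h1 : insert v (W.erase v) = W := Finset.insert_erase hv
    exact Sigma.ext (by rw [h1]) (by rw [h1])

lemma aux_levelset_sum {n : ℕ} (U : Finset (Fin n)) (c : Fin n → ℕ) (M : ℕ)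
    (hc : ∀ v, c v ≤ M) :
    ∑ θ ∈ Finset.Icc 1 M, (U.filter (fun v => θ ≤ c v)).card = ∑ v ∈ U, c v := by
  have h1 : ∀ θ, (U.filter (fun v => θ ≤ c v)).card
      = ∑ v ∈ U, if θ ≤ c v then 1 else 0 := by
    intro θ; rw [Finset.card_filter]
  calc ∑ θ ∈ Finset.Icc 1 M, (U.filter (fun v => θ ≤ c v)).card
      = ∑ θ ∈ Finset.Icc 1 M, ∑ v ∈ U, if θ ≤ c v then 1 else 0 := by
        apply Finset.sum_congr rfl; intro θ _; exact h1 θ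
    _ = ∑ v ∈ U, ∑ θ ∈ Finset.Icc 1 M, if θ ≤ c v then 1 else 0 := Finset.sum_comm
    _ = ∑ v ∈ U, c v := by
        apply Finset.sum_congr rfl
        intro v _
        rw [← Finset.card_filter]
        have : (Finset.Icc 1 M).filter (fun θ => θ ≤ c v) = Finset.Icc 1 (c v) := by
          ext θ
          simp only [Finset.mem_filter, Finset.mem_Icc]
          constructor
          · rintro ⟨⟨h1, h2⟩, h3⟩; exact ⟨h1, h3⟩
          · rintro ⟨h1, h3⟩; exact ⟨⟨h1, le_trans h3 (hc v)⟩, h3⟩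
        rw [this, Nat.card_Icc]
        omega

lemma aux_pcs_one {n : ℕ} (U T : Finset (Fin n)) (G : Finset (Finset (Fin n))) :
    ((U.powersetCard 1).filter (fun W => T ∪ W ∈ G)).card
      = (U.filter (fun v => insert v T ∈ G)).card := by
  symm
  apply Finset.card_bij (i := fun v _ => ({v} : Finset (Fin n)))
  · intro v hv
    rw [Finset.mem_filter] at hv
    rw [Finset.mem_filter, Finset.mem_powersetCard]
    refine ⟨⟨Finset.singleton_subset_iff.mpr hv.1, Finset.card_singleton v⟩, ?_⟩
    rw [show T ∪ {v} = insert v T by rw [Finset.union_comm, ← Finset.insert_eq]]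
    exact hv.2
  · intro v₁ _ v₂ _ h
    exact Finset.singleton_injective h
  · intro W hW
    rw [Finset.mem_filter, Finset.mem_powersetCard] at hW
    obtain ⟨⟨hsub, hcard⟩, hmem⟩ := hW
    obtain ⟨w, rfl⟩ := Finset.card_eq_one.mp hcard
    refine ⟨w, ?_, rfl⟩
    rw [Finset.mem_filter]
    refine ⟨Finset.singleton_subset_iff.mp hsub, ?_⟩
    rw [show insert w T = T ∪ {w} by rw [Finset.union_comm, ← Finset.insert_eq]]
    exact hmem

/-- The main deterministic degree-inheritance induction. -/
lemma aux_deg_induct {n k q : ℕ} (η : ℝ) (hη0 : 0 < η) (hn1 : 1 ≤ n) (hqn : q ≤ n)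
    (G : Finset (Finset (Fin n))) (hG : ∀ e ∈ G, e.card = k)
    (V : Finset (Fin n)) (hVcard : V.card = q)
    (hgood : ∀ (e' : ℕ) (T : Finset (Fin n)) (θ : ℕ), e' ≤ k → T.card ≤ k →
      1 ≤ θ → θ ≤ n^k →
      (q:ℝ)/n * ((univ.filter (fun v => θ ≤
          (((univ : Finset (Fin n)).powersetCard e').filter
            (fun W => insert v T ∪ W ∈ G)).card)).card)
        - η*q
      ≤ (((V ∩ univ.filter (fun v => θ ≤
          (((univ : Finset (Fin n)).powersetCard e').filter
            (fun W => insert v T ∪ W ∈ G)).card))).card : ℝ)) :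
    ∀ e, 1 ≤ e → e ≤ k → ∀ T : Finset (Fin n), T.card + e = k →
      ((q:ℝ)/n)^e * ((((univ : Finset (Fin n)).powersetCard e).filter
            (fun W => T ∪ W ∈ G)).card : ℝ)
          - e * η * q^e
        ≤ (((V.powersetCard e).filter (fun W => T ∪ W ∈ G)).card : ℝ) := by
  have hnR : (0:ℝ) < n := by exact_mod_cast hn1
  have hqR : (0:ℝ) ≤ q := by positivity
  intro e
  induction e with
  | zero => intro h; omega
  | succ e ih =>
    intro _ hek T hT
    have hVsimp : ∀ (p : Fin n → Prop) [DecidablePred p],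
        V ∩ univ.filter p = V.filter p := by
      intro p _
      ext v
      simp [Finset.mem_filter, Finset.mem_inter]
    rcases Nat.eq_zero_or_pos e with rfl | he1
    · -- base case e+1 = 1
      have hbase := hgood 0 T 1 (by omega) (by omega) le_rfl
        (Nat.one_le_iff_ne_zero.mpr (by positivity))
      have hAeq : (univ.filter (fun v => 1 ≤
          (((univ : Finset (Fin n)).powersetCard 0).filter
            (fun W => insert v T ∪ W ∈ G)).card))
          = univ.filter (fun v => insert v T ∈ G) := by
        apply Finset.filter_congr
        intro v _
        rw [Finset.powersetCard_zero]
        rcases em (insert v T ∪ ∅ ∈ G) with h | h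
        · rw [Finset.filter_singleton, if_pos h]
          simp only [Finset.union_empty] at h
          simp [h]
        · rw [Finset.filter_singleton, if_neg h]
          simp only [Finset.union_empty] at h
          simp [h]
      rw [hAeq, hVsimp] at hbase
      rw [aux_pcs_one V T G, aux_pcs_one univ T G]
      push_cast
      simp only [zero_add, pow_one]
      norm_num
      linarith [hbase]
    · -- inductive step
      have hstep1 : ∑ v ∈ V, (((V.powersetCard e).filter
            (fun W => insert v T ∪ W ∈ G)).card)
          = (e+1) * ((V.powersetCard (e+1)).filter (fun W => T ∪ W ∈ G)).card :=
        aux_double_count G hG V e T hT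
      have hstep2 : ∑ v ∈ (univ : Finset (Fin n)), (((univ : Finset (Fin n)).powersetCard e).filter
            (fun W => insert v T ∪ W ∈ G)).card
          = (e+1) * (((univ : Finset (Fin n)).powersetCard (e+1)).filter
              (fun W => T ∪ W ∈ G)).card :=
        aux_double_count G hG univ e T hT
      set c : Fin n → ℕ := fun v => (((univ : Finset (Fin n)).powersetCard e).filter
            (fun W => insert v T ∪ W ∈ G)).card with hc
      have hcM : ∀ v, c v ≤ n^e := by
        intro v
        calc c v ≤ ((univ : Finset (Fin n)).powersetCard e).card := Finset.card_filter_le _ _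
          _ = n.choose e := by rw [Finset.card_powersetCard, Finset.card_univ, Fintype.card_fin]
          _ ≤ n^e := aux_choose_le_pow n e
      -- pointwise bound on V
      have hpt : ∀ v ∈ V, ((q:ℝ)/n)^e * (c v : ℝ) - e * η * q^e
          ≤ ((((V.powersetCard e).filter (fun W => insert v T ∪ W ∈ G)).card : ℝ)) := by
        intro v hv
        by_cases hvT : v ∈ T
        · have hceq : c v = 0 := by
            rw [hc]
            simp only
            rw [Finset.card_eq_zero, Finset.filter_eq_empty_iff]
            intro W hW
            rw [Finset.mem_powersetCard] at hW
            intro hmem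
            have h1 : insert v T = T := Finset.insert_eq_self.mpr hvT
            have h2 : (T ∪ W).card ≤ T.card + W.card := Finset.card_union_le _ _
            have h3 : (insert v T ∪ W).card = k := hG _ hmem
            rw [h1] at h3
            omega
          rw [hceq]
          have : (0:ℝ) ≤ (((V.powersetCard e).filter
              (fun W => insert v T ∪ W ∈ G)).card : ℝ) := by positivity
          have he0 : (0:ℝ) ≤ e * η * q^e := by positivity
          push_cast
          linarith
        · have hT' : (insert v T).card + e = k := by
            rw [Finset.card_insert_of_notMem hvT]; omega
          exact ih he1 (by omega) (insert v T) hT'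
      -- sum the pointwise bounds over V
      have hsumV : ((q:ℝ)/n)^e * (∑ v ∈ V, (c v : ℝ)) - q * (e * η * q^e)
          ≤ ∑ v ∈ V, ((((V.powersetCard e).filter
              (fun W => insert v T ∪ W ∈ G)).card : ℝ)) := by
        have := Finset.sum_le_sum hpt
        rw [Finset.sum_sub_distrib, Finset.sum_const, ← Finset.mul_sum] at this
        rw [hVcard] at this
        simpa using this
      -- level set bound for ∑_{v ∈ V} c v
      have hlvlV : ∑ θ ∈ Finset.Icc 1 (n^e), ((V.filter (fun v => θ ≤ c v)).card)
          = ∑ v ∈ V, c v := aux_levelset_sum V c (n^e) hcM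
      have hlvlU : ∑ θ ∈ Finset.Icc 1 (n^e), (((univ : Finset (Fin n)).filter
            (fun v => θ ≤ c v)).card)
          = ∑ v ∈ (univ : Finset (Fin n)), c v := aux_levelset_sum univ c (n^e) hcM
      have hgood' : ∀ θ ∈ Finset.Icc 1 (n^e),
          (q:ℝ)/n * (((univ : Finset (Fin n)).filter (fun v => θ ≤ c v)).card) - η*q
          ≤ ((V.filter (fun v => θ ≤ c v)).card : ℝ) := by
        intro θ hθ
        rw [Finset.mem_Icc] at hθ
        have := hgood e T θ (by omega) (by omega) hθ.1
          (le_trans hθ.2 (Nat.pow_le_pow_right hn1 (by omega)))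
        rw [hVsimp] at this
        exact this
      have hsumgood : (q:ℝ)/n * (∑ v ∈ (univ : Finset (Fin n)), (c v:ℝ)) - η*q*(n^e)
          ≤ ∑ v ∈ V, (c v : ℝ) := by
        have hs := Finset.sum_le_sum hgood'
        rw [Finset.sum_sub_distrib, Finset.sum_const, ← Finset.mul_sum] at hs
        rw [Nat.card_Icc] at hs
        have hcastV : ∑ θ ∈ Finset.Icc 1 (n^e), ((V.filter (fun v => θ ≤ c v)).card : ℝ)
            = ∑ v ∈ V, (c v : ℝ) := by
          rw [← Nat.cast_sum, ← Nat.cast_sum, hlvlV]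
        have hcastU : ∑ θ ∈ Finset.Icc 1 (n^e), (((univ : Finset (Fin n)).filter
              (fun v => θ ≤ c v)).card : ℝ)
            = ∑ v ∈ (univ : Finset (Fin n)), (c v : ℝ) := by
          rw [← Nat.cast_sum, ← Nat.cast_sum, hlvlU]
        rw [hcastV, hcastU] at hs
        simp only [Nat.add_sub_cancel, nsmul_eq_mul, Nat.cast_pow] at hs
        linarith
      -- put everything together
      have hcast1 : ∑ v ∈ V, ((((V.powersetCard e).filter
            (fun W => insert v T ∪ W ∈ G)).card : ℝ))
          = ((e:ℝ)+1) * (((V.powersetCard (e+1)).filter (fun W => T ∪ W ∈ G)).card : ℝ) := by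
        rw [← Nat.cast_sum, hstep1]
        push_cast; ring
      have hcast2 : ∑ v ∈ (univ : Finset (Fin n)), (c v : ℝ)
          = ((e:ℝ)+1) * ((((univ : Finset (Fin n)).powersetCard (e+1)).filter
              (fun W => T ∪ W ∈ G)).card : ℝ) := by
        rw [← Nat.cast_sum, hstep2]
        push_cast; ring
      set DU : ℝ := ((((univ : Finset (Fin n)).powersetCard (e+1)).filter
          (fun W => T ∪ W ∈ G)).card : ℝ) with hDU
      set DV : ℝ := (((V.powersetCard (e+1)).filter (fun W => T ∪ W ∈ G)).card : ℝ) with hDV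
      rw [hcast1] at hsumV
      rw [hcast2] at hsumgood
      -- combine: ((e:ℝ)+1) * DV ≥ (q/n)^e * ((q/n)(e+1)DU - ηq n^e) - q e η q^e
      have hr0 : (0:ℝ) ≤ ((q:ℝ)/n)^e := by positivity
      have hchain : ((q:ℝ)/n)^e * ((q:ℝ)/n * (((e:ℝ)+1) * DU) - η*q*(n^e))
            - q * (e * η * q^e)
          ≤ ((e:ℝ)+1) * DV := by
        have h1 : ((q:ℝ)/n)^e * ((q:ℝ)/n * (((e:ℝ)+1) * DU) - η*q*(n^e))
            ≤ ((q:ℝ)/n)^e * (∑ v ∈ V, (c v : ℝ)) :=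
          mul_le_mul_of_nonneg_left hsumgood hr0
        linarith
      have hpow : ((q:ℝ)/n)^e * ((n:ℝ)^e) = (q:ℝ)^e := by
        rw [div_pow, div_mul_cancel₀]
        positivity
      have hfinal : ((e:ℝ)+1) * (((q:ℝ)/n)^(e+1) * DU - ((e:ℝ)+1) * η * q^(e+1))
          ≤ ((e:ℝ)+1) * DV := by
        have expand : ((q:ℝ)/n)^e * ((q:ℝ)/n * (((e:ℝ)+1) * DU) - η*q*(n^e))
              - q * (e * η * q^e)
            = ((e:ℝ)+1) * (((q:ℝ)/n)^(e+1) * DU) - (((q:ℝ)/n)^e * (n:ℝ)^e) * (η*q)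
              - e * η * q^(e+1) := by
          ring
        rw [expand, hpow] at hchain
        have : ((e:ℝ)+1) * (((q:ℝ)/n)^(e+1) * DU - ((e:ℝ)+1) * η * q^(e+1))
            = ((e:ℝ)+1) * (((q:ℝ)/n)^(e+1) * DU)
              - ((e:ℝ)+1)^2 * η * q^(e+1) := by ring
        rw [this]
        have e1 : (q:ℝ)^e * (η * q) = η * q^(e+1) := by ring
        rw [e1] at hchain
        have hnn : (0:ℝ) ≤ η * q^(e+1) := by positivity
        have h2 : ((e:ℝ)+1) * (η * q^(e+1)) ≤ ((e:ℝ)+1)^2 * (η * q^(e+1)) := by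
          apply mul_le_mul_of_nonneg_right _ hnn
          nlinarith [Nat.cast_nonneg (α := ℝ) e]
        nlinarith [hchain, h2]
      have hepos : (0:ℝ) < (e:ℝ)+1 := by positivity
      have := (mul_le_mul_iff_of_pos_left hepos).mp hfinal
      push_cast
      push_cast at this
      linarith

lemma aux_degU_eq {n k d : ℕ} (G : Finset (Finset (Fin n))) (hG : ∀ e ∈ G, e.card = k)
    (S : Finset (Fin n)) (hS : S.card = d) (hdk : d ≤ k) :
    (((univ : Finset (Fin n)).powersetCard (k-d)).filter (fun W => S ∪ W ∈ G)).card
      = (G.filter (fun e => S ⊆ e)).card := by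
  apply Finset.card_nbij' (i := fun W => S ∪ W) (j := fun e => e \ S)
  · intro W hW
    rw [Finset.mem_coe, Finset.mem_filter, Finset.mem_powersetCard] at hW
    rw [Finset.mem_coe, Finset.mem_filter]
    exact ⟨hW.2, Finset.subset_union_left⟩
  · intro e he
    rw [Finset.mem_coe, Finset.mem_filter] at he
    rw [Finset.mem_coe, Finset.mem_filter, Finset.mem_powersetCard]
    have hcard : e.card = k := hG e he.1
    refine ⟨⟨Finset.subset_univ _, ?_⟩, ?_⟩
    · rw [Finset.card_sdiff_of_subset he.2, hcard, hS]
    · rw [Finset.union_sdiff_of_subset he.2]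
      exact he.1
  · intro W hW
    rw [Finset.mem_coe, Finset.mem_filter, Finset.mem_powersetCard] at hW
    have hck : (S ∪ W).card = k := hG _ hW.2
    have hdisj : Disjoint S W := by
      have h1 := Finset.card_union_add_card_inter S W
      rw [hck, hS, hW.1.2] at h1
      have h2 : (S ∩ W).card = 0 := by omega
      rw [Finset.card_eq_zero] at h2
      exact Finset.disjoint_iff_inter_eq_empty.mpr h2
    show (S ∪ W) \ S = W
    rw [Finset.union_sdiff_left, Finset.sdiff_eq_self_iff_disjoint.mpr hdisj.symm]
  · intro e he
    rw [Finset.mem_coe, Finset.mem_filter] at he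
    show S ∪ e \ S = e
    rw [Finset.union_sdiff_of_subset he.2]

/-- Lemma 3.5 (lem:random): the vertex set of a hypergraph collection can be partitioned
into prescribed linear-sized parts, each preserving the minimum degree condition. -/
theorem stmt_5 (k d : ℕ) (hd1 : 1 ≤ d) (hdk : d ≤ k - 1) (δ : ℝ) (α β : ℝ)
    (hα : 0 < α) (hβ : 0 < β) :
    ∃ N : ℕ, ∀ n : ℕ, N ≤ n → ∀ m : ℕ, m ≤ n ^ 2 → ∀ t : ℕ, ∀ ns : Fin t → ℕ,
      (∀ i, β * n ≤ (ns i : ℝ)) → (∑ i, ns i) = n →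
      ∀ H : Fin m → Finset (Finset (Fin n)),
        (∀ j : Fin m, ∀ e ∈ H j, e.card = k) →
        (∀ j : Fin m, ∀ S : Finset (Fin n), S.card = d →
          (δ + α) * (n : ℝ) ^ (k - d) ≤ (((H j).filter (fun e => S ⊆ e)).card : ℝ)) →
        ∃ V : Fin t → Finset (Fin n),
          (∀ i, (V i).card = ns i) ∧
          (∀ i j, i ≠ j → Disjoint (V i) (V j)) ∧
          (∀ v : Fin n, ∃ i, v ∈ V i) ∧
          ∀ S : Finset (Fin n), S.card = d → ∀ i : Fin t, ∀ j : Fin m,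
            (δ + α / 2) * ((ns i : ℝ)) ^ (k - d) ≤
              ((((V i).powersetCard (k - d)).filter (fun W => S ∪ W ∈ H j)).card : ℝ) := by
  have hk2 : 2 ≤ k := by omega
  have hdk' : d < k := by omega
  set w := k - d with hw
  have hw1 : 1 ≤ w := by omega
  have hdw : d + w = k := by omega
  have hwk : w ≤ k := by omega
  set η : ℝ := min (α / (2*k)) (1/2) with hηdef
  have hkR : (0:ℝ) < k := by positivity
  have hη0 : 0 < η := by
    apply lt_min
    · positivity
    · norm_num
  have hη1 : η ≤ 1 := le_trans (min_le_right _ _) (by norm_num)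
  set β' : ℝ := min β 1 with hβ'def
  have hβ'0 : 0 < β' := lt_min hβ (by norm_num)
  have hβ'1 : β' ≤ 1 := min_le_right _ _
  obtain ⟨N₀, hN₀pos, hHG⟩ := aux_HG η β' hη0 hη1 hβ'0 hβ'1 (3*k+5)
  refine ⟨max N₀ (2*(k+1)^2 + 2), fun n hn m hm t ns hβns hsum H hcard hdeg => ?_⟩
  have hnN₀ : N₀ ≤ n := le_trans (le_max_left _ _) hn
  have hn1 : 1 ≤ n := le_trans hN₀pos hnN₀
  have hnk : 2*(k+1)^2 + 2 ≤ n := le_trans (le_max_right _ _) hn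
  have hnR : (0:ℝ) < n := by exact_mod_cast hn1
  -- part sizes
  have hns_le : ∀ i, ns i ≤ n := by
    intro i
    rw [← hsum]
    exact Finset.single_le_sum (f := ns) (fun _ _ => Nat.zero_le _) (Finset.mem_univ i)
  have hβ'ns : ∀ i, β' * n ≤ (ns i : ℝ) := by
    intro i
    refine le_trans ?_ (hβns i)
    apply mul_le_mul_of_nonneg_right (min_le_left β 1) hnR.le
  have hns1 : ∀ i, 1 ≤ ns i := by
    intro i
    have h1 : (0:ℝ) < ns i := lt_of_lt_of_le (by positivity) (hβ'ns i)
    exact_mod_cast Nat.one_le_iff_ne_zero.mpr (by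
      intro h; rw [h] at h1; simp at h1)
  have htn : t ≤ n := by
    have h1 : ∑ _i : Fin t, 1 ≤ ∑ i, ns i := Finset.sum_le_sum (fun i _ => hns1 i)
    simp only [Finset.sum_const, Finset.card_univ, Fintype.card_fin, smul_eq_mul,
      mul_one] at h1
    omega
  -- the partition space is nonempty
  obtain ⟨Vex, hVexsub, hVexcard, hVexcov, hVexdisj⟩ :=
    aux_exists_partition t (univ : Finset (Fin n)) ns
      (by rw [Finset.card_univ, Fintype.card_fin]; exact hsum.symm)
  have hΩne : (auxOmega n t ns).Nonempty := by
    refine ⟨Vex, ?_⟩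
    rw [auxOmega, Finset.mem_filter]
    exact ⟨Finset.mem_univ _, hVexcard, fun v => hVexcov v (Finset.mem_univ v), hVexdisj⟩
  have hΩpos : 0 < (auxOmega n t ns).card := Finset.card_pos.mpr hΩne
  -- index data
  set Ts : Finset (Finset (Fin n)) :=
    (Finset.range (k+1)).biUnion (fun r => (univ : Finset (Fin n)).powersetCard r) with hTsdef
  set I := (univ : Finset (Fin m)) ×ˢ (Ts ×ˢ ((Finset.range (k+1)) ×ˢ
    (Finset.range (n^k+1)))) with hIdef
  set Aset : (Fin m × (Finset (Fin n) × (ℕ × ℕ))) → Finset (Fin n) := fun x =>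
    univ.filter (fun v => x.2.2.2 ≤
      (((univ : Finset (Fin n)).powersetCard x.2.2.1).filter
        (fun W => insert v x.2.1 ∪ W ∈ H x.1)).card) with hAdef
  -- per-event counting bound
  have hev : ∀ (i : Fin t) (x : Fin m × (Finset (Fin n) × (ℕ × ℕ))),
      ((auxOmega n t ns).filter (fun c => (((c i) ∩ Aset x).card : ℝ) <
        (ns i : ℝ) * (Aset x).card / n - η * (ns i))).card * n^(3*k+5)
        ≤ (auxOmega n t ns).card := by
    intro i x
    set P : Finset (Fin n) → Prop := fun U => ((U ∩ Aset x).card : ℝ) <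
      (ns i : ℝ) * (Aset x).card / n - η * (ns i) with hPdef
    have hcnt := aux_count_main ns i P
    have hbadV := hHG n hnN₀ (ns i) (hns_le i) (hβ'ns i) (Aset x)
    have hchpos : 0 < n.choose (ns i) := Nat.choose_pos (hns_le i)
    -- count * choose = badV * Ω
    have key : ((auxOmega n t ns).filter (fun c => P (c i))).card * n^(3*k+5)
        * (n.choose (ns i))
        ≤ (auxOmega n t ns).card * (n.choose (ns i)) := by
      calc ((auxOmega n t ns).filter (fun c => P (c i))).card * n^(3*k+5) * (n.choose (ns i))
          = (((auxOmega n t ns).filter (fun c => P (c i))).card * (n.choose (ns i)))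
            * n^(3*k+5) := by ring
        _ = ((((univ : Finset (Fin n)).powersetCard (ns i)).filter P).card
            * (auxOmega n t ns).card) * n^(3*k+5) := by rw [hcnt]
        _ = ((((univ : Finset (Fin n)).powersetCard (ns i)).filter P).card * n^(3*k+5))
            * (auxOmega n t ns).card := by ring
        _ ≤ (n.choose (ns i)) * (auxOmega n t ns).card := by
            apply Nat.mul_le_mul_right
            exact hbadV
        _ = (auxOmega n t ns).card * (n.choose (ns i)) := by ring
    exact Nat.le_of_mul_le_mul_right key hchpos
  -- the bad set
  set Bad := (auxOmega n t ns).filter (fun c => ∃ i : Fin t, ∃ x ∈ I,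
    (((c i) ∩ Aset x).card : ℝ) < (ns i : ℝ) * (Aset x).card / n - η * (ns i)) with hBaddef
  -- union bound
  have hBadsub : Bad ⊆ (Finset.univ (α := Fin t) ×ˢ I).biUnion (fun p =>
      (auxOmega n t ns).filter (fun c => (((c p.1) ∩ Aset p.2).card : ℝ) <
        (ns p.1 : ℝ) * (Aset p.2).card / n - η * (ns p.1))) := by
    intro c hc
    rw [hBaddef, Finset.mem_filter] at hc
    obtain ⟨hcΩ, i, x, hxI, hlt⟩ := hc
    rw [Finset.mem_biUnion]
    exact ⟨(i, x), Finset.mem_product.mpr ⟨Finset.mem_univ _, hxI⟩,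
      Finset.mem_filter.mpr ⟨hcΩ, hlt⟩⟩
  have hIcard : t * I.card < n^(3*k+5) := by
    have hTs : Ts.card ≤ (k+1) * n^k := by
      calc Ts.card ≤ ∑ r ∈ Finset.range (k+1),
            ((univ : Finset (Fin n)).powersetCard r).card := Finset.card_biUnion_le
        _ ≤ ∑ r ∈ Finset.range (k+1), n^k := by
            apply Finset.sum_le_sum
            intro r hr
            rw [Finset.mem_range] at hr
            rw [Finset.card_powersetCard, Finset.card_univ, Fintype.card_fin]
            exact le_trans (aux_choose_le_pow n r)
              (Nat.pow_le_pow_right hn1 (by omega))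
        _ = (k+1) * n^k := by rw [Finset.sum_const, Finset.card_range, smul_eq_mul]
    have hIc : I.card ≤ m * ((k+1) * n^k * ((k+1) * (n^k+1))) := by
      rw [hIdef, Finset.card_product, Finset.card_product, Finset.card_product,
        Finset.card_univ, Fintype.card_fin, Finset.card_range, Finset.card_range]
      apply Nat.mul_le_mul_left
      calc Ts.card * ((k+1) * (n^k+1)) ≤ ((k+1) * n^k) * ((k+1) * (n^k+1)) :=
            Nat.mul_le_mul_right _ hTs
        _ = (k+1) * n^k * ((k+1) * (n^k+1)) := rfl
    have hnk1 : n^k + 1 ≤ 2 * n^k := by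
      have : 1 ≤ n^k := Nat.one_le_pow _ _ (by omega)
      omega
    have hbound : t * I.card ≤ 2*(k+1)^2 * n^(2*k+3) := by
      calc t * I.card ≤ n * (n^2 * ((k+1) * n^k * ((k+1) * (n^k+1)))) := by
            apply Nat.mul_le_mul htn
            apply le_trans hIc
            apply Nat.mul_le_mul_right _ hm
        _ ≤ n * (n^2 * ((k+1) * n^k * ((k+1) * (2 * n^k)))) := by
            apply Nat.mul_le_mul_left
            apply Nat.mul_le_mul_left
            apply Nat.mul_le_mul_left
            exact Nat.mul_le_mul_left _ hnk1
        _ = 2*(k+1)^2 * n^(2*k+3) := by ring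
    have hfin : 2*(k+1)^2 * n^(2*k+3) < n^(3*k+5) := by
      have h1 : 2*(k+1)^2 < n^(k+2) := by
        calc 2*(k+1)^2 < 2*(k+1)^2 + 2 := by omega
          _ ≤ n := hnk
          _ ≤ n^(k+2) := Nat.le_self_pow (by omega) n
      calc 2*(k+1)^2 * n^(2*k+3) < n^(k+2) * n^(2*k+3) :=
            mul_lt_mul_of_pos_right h1 (pow_pos (by omega) _)
        _ = n^(3*k+5) := by rw [← pow_add]; ring_nf
    omega
  have hBadlt : Bad.card < (auxOmega n t ns).card := by
    have hsum1 : Bad.card ≤ ∑ p ∈ (Finset.univ (α := Fin t) ×ˢ I),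
        ((auxOmega n t ns).filter (fun c => (((c p.1) ∩ Aset p.2).card : ℝ) <
          (ns p.1 : ℝ) * (Aset p.2).card / n - η * (ns p.1))).card :=
      le_trans (Finset.card_le_card hBadsub) (Finset.card_biUnion_le)
    have h2 : Bad.card * n^(3*k+5) ≤ ∑ p ∈ (Finset.univ (α := Fin t) ×ˢ I),
        (((auxOmega n t ns).filter (fun c => (((c p.1) ∩ Aset p.2).card : ℝ) <
          (ns p.1 : ℝ) * (Aset p.2).card / n - η * (ns p.1))).card * n^(3*k+5)) := by
      rw [← Finset.sum_mul]
      exact Nat.mul_le_mul_right _ hsum1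
    have h3 : ∑ p ∈ (Finset.univ (α := Fin t) ×ˢ I),
        (((auxOmega n t ns).filter (fun c => (((c p.1) ∩ Aset p.2).card : ℝ) <
          (ns p.1 : ℝ) * (Aset p.2).card / n - η * (ns p.1))).card * n^(3*k+5))
        ≤ ∑ _p ∈ (Finset.univ (α := Fin t) ×ˢ I), (auxOmega n t ns).card :=
      Finset.sum_le_sum (fun p _ => hev p.1 p.2)
    have h4 : ∑ _p ∈ (Finset.univ (α := Fin t) ×ˢ I), (auxOmega n t ns).card
        = t * I.card * (auxOmega n t ns).card := by
      rw [Finset.sum_const, Finset.card_product, Finset.card_univ, Fintype.card_fin,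
        smul_eq_mul]
    have h5 : Bad.card * n^(3*k+5) < n^(3*k+5) * (auxOmega n t ns).card := by
      calc Bad.card * n^(3*k+5) ≤ t * I.card * (auxOmega n t ns).card :=
            le_trans h2 (le_of_le_of_eq h3 h4)
        _ < n^(3*k+5) * (auxOmega n t ns).card :=
            mul_lt_mul_of_pos_right hIcard hΩpos
    have h6 : Bad.card * n^(3*k+5) < (auxOmega n t ns).card * n^(3*k+5) := by
      calc Bad.card * n^(3*k+5) < n^(3*k+5) * (auxOmega n t ns).card := h5
        _ = (auxOmega n t ns).card * n^(3*k+5) := by ring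
    exact lt_of_mul_lt_mul_right h6 (Nat.zero_le _)
  -- pick a good partition
  have hgoodne : ((auxOmega n t ns) \ Bad).Nonempty := by
    rw [← Finset.card_pos, Finset.card_sdiff_of_subset (Finset.filter_subset _ _)]
    exact Nat.sub_pos_of_lt hBadlt
  obtain ⟨c, hcmem⟩ := hgoodne
  rw [Finset.mem_sdiff] at hcmem
  obtain ⟨hcΩ, hcnb⟩ := hcmem
  have hcprops := hcΩ
  rw [auxOmega, Finset.mem_filter] at hcprops
  obtain ⟨-, hccard, hccov, hcdisj⟩ := hcprops
  refine ⟨c, hccard, hcdisj, hccov, ?_⟩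
  intro S hS i j
  have hnotbad : ∀ (i' : Fin t) (x : Fin m × (Finset (Fin n) × (ℕ × ℕ))), x ∈ I →
      ¬((((c i') ∩ Aset x).card : ℝ) < (ns i' : ℝ) * (Aset x).card / n - η * (ns i')) := by
    intro i' x hxI hlt
    apply hcnb
    rw [hBaddef, Finset.mem_filter]
    exact ⟨hcΩ, i', x, hxI, hlt⟩
  -- goodness hypothesis for the induction
  have hgood : ∀ (e' : ℕ) (T : Finset (Fin n)) (θ : ℕ), e' ≤ k → T.card ≤ k →
      1 ≤ θ → θ ≤ n^k →
      (ns i:ℝ)/n * ((univ.filter (fun v => θ ≤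
          (((univ : Finset (Fin n)).powersetCard e').filter
            (fun W => insert v T ∪ W ∈ H j)).card)).card)
        - η*(ns i)
      ≤ (((c i ∩ univ.filter (fun v => θ ≤
          (((univ : Finset (Fin n)).powersetCard e').filter
            (fun W => insert v T ∪ W ∈ H j)).card)).card : ℕ) : ℝ) := by
    intro e' T θ he' hTc hθ1 hθ2
    have hxI : ((j, (T, (e', θ))) : Fin m × (Finset (Fin n) × (ℕ × ℕ))) ∈ I := by
      rw [hIdef]
      refine Finset.mem_product.mpr ⟨Finset.mem_univ _, Finset.mem_product.mpr
        ⟨?_, Finset.mem_product.mpr ⟨?_, ?_⟩⟩⟩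
      · rw [hTsdef]
        exact Finset.mem_biUnion.mpr ⟨T.card, Finset.mem_range.mpr (by omega),
          Finset.mem_powersetCard.mpr ⟨Finset.subset_univ _, rfl⟩⟩
      · show e' ∈ Finset.range (k+1)
        exact Finset.mem_range.mpr (by omega)
      · show θ ∈ Finset.range (n^k+1)
        exact Finset.mem_range.mpr (by omega)
    have h := hnotbad i _ hxI
    push_neg at h
    have hAx : Aset (j, (T, (e', θ))) = univ.filter (fun v => θ ≤
        (((univ : Finset (Fin n)).powersetCard e').filter
          (fun W => insert v T ∪ W ∈ H j)).card) := rfl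
    rw [hAx] at h
    have heq : (ns i : ℝ) * ((univ.filter (fun v => θ ≤
        (((univ : Finset (Fin n)).powersetCard e').filter
          (fun W => insert v T ∪ W ∈ H j)).card)).card : ℝ) / n
        = (ns i:ℝ)/n * ((univ.filter (fun v => θ ≤
        (((univ : Finset (Fin n)).powersetCard e').filter
          (fun W => insert v T ∪ W ∈ H j)).card)).card : ℝ) := by ring
    linarith [h, heq.ge, heq.le]
  have hInd := aux_deg_induct (n := n) (k := k) (q := ns i) η hη0 hn1 (hns_le i)
    (H j) (hcard j) (c i) (hccard i) hgood w hw1 hwk S (by rw [hS]; exact hdw)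
  -- lower bound on the global degree
  have hU := aux_degU_eq (H j) (hcard j) S hS (by omega)
  have hdegS : (δ + α) * (n:ℝ)^w ≤
      (((((univ : Finset (Fin n)).powersetCard w).filter
        (fun W => S ∪ W ∈ H j)).card : ℕ) : ℝ) := by
    have := hdeg j S hS
    have hUC : (((((univ : Finset (Fin n)).powersetCard w).filter
        (fun W => S ∪ W ∈ H j)).card : ℕ) : ℝ)
        = (((H j).filter (fun e => S ⊆ e)).card : ℝ) := by
      exact_mod_cast congrArg (Nat.cast (R := ℝ)) hU
    rw [hUC]
    exact this
  set q := ns i with hqdef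
  have hr0 : (0:ℝ) ≤ ((q:ℝ)/n)^w := by positivity
  have h1 : ((q:ℝ)/n)^w * ((δ+α)*(n:ℝ)^w) ≤ ((q:ℝ)/n)^w *
      (((((univ : Finset (Fin n)).powersetCard w).filter
        (fun W => S ∪ W ∈ H j)).card : ℕ) : ℝ) :=
    mul_le_mul_of_nonneg_left hdegS hr0
  have h2 : ((q:ℝ)/n)^w * ((δ+α)*(n:ℝ)^w) = (δ+α)*(q:ℝ)^w := by
    rw [div_pow]
    field_simp
  have h3 : (w:ℝ)*η ≤ α/2 := by
    have hwkR : (w:ℝ) ≤ k := by exact_mod_cast hwk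
    have hηle : η ≤ α/(2*k) := min_le_left _ _
    calc (w:ℝ)*η ≤ (k:ℝ)*η := mul_le_mul_of_nonneg_right hwkR hη0.le
      _ ≤ (k:ℝ)*(α/(2*k)) := mul_le_mul_of_nonneg_left hηle (by positivity)
      _ = α/2 := by field_simp
  have h4 : (w:ℝ)*η*(q:ℝ)^w ≤ (α/2)*(q:ℝ)^w :=
    mul_le_mul_of_nonneg_right h3 (by positivity)
  have hgoal : (δ + α/2) * (q:ℝ)^w ≤
      ((((c i).powersetCard w).filter (fun W => S ∪ W ∈ H j)).card : ℝ) := by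
    have expand : (δ + α/2) * (q:ℝ)^w = (δ+α)*(q:ℝ)^w - (α/2)*(q:ℝ)^w := by ring
    rw [expand]
    linarith [hInd, h1, h2.symm.le, h2.le, h4]
  exact hgoal
end

section
/- Let $n$ be even and let $V=A\cup B$ be a partition of an $n$-vertex set into two sets of size $n/2$. Let $F$ be any graph with $m$ edges such that $F$ has no bridge (no edge whose removal increases the number of connected components). Define a graph collection $(H_1,\dots,H_m)$ on $V$ where $H_1=\dots=H_{m-1}$ is the disjoint union of a complete graph on $A$ and a complete graph on $B$, and $H_m$ is the complete bipartite graph between $A$ and $B$. Then every graph $G_i$ in the collection has minimum degree $n/2-1$ or more precisely $\delta(H_i)\ge n/2-1$ for $i<m$ and $\delta(H_m)=n/2$, yet the collection contains no transversal copy of $F$. -/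
open scoped Classical

/-- The extremal construction: two cliques on the halves for all colours but the last,
and the complete bipartite graph for the last colour. Every graph in the collection has
minimum degree at least `n/2 - 1` (and the last exactly `n/2`), yet there is no
transversal copy of any bridgeless `m`-edge graph `F`. -/
theorem stmt_9 (n m : ℕ) (hn : Even n) (hm : 0 < m)
    (A B : Finset (Fin n)) (hAB : Disjoint A B) (hABu : A ∪ B = Finset.univ)
    (hAcard : A.card = n / 2) (hBcard : B.card = n / 2)
    (F : SimpleGraph (Fin n)) (hFm : F.edgeFinset.card = m)
    (hbridgeless : ∀ e : Sym2 (Fin n), ¬ F.IsBridge e)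
    (H : Fin m → SimpleGraph (Fin n))
    (hH1 : ∀ i : Fin m, (i : ℕ) < m - 1 →
      H i = SimpleGraph.fromRel (fun x y => (x ∈ A ↔ y ∈ A)))
    (hH2 : H ⟨m - 1, by omega⟩ = SimpleGraph.fromRel (fun x y => ¬ (x ∈ A ↔ y ∈ A))) :
    (∀ i : Fin m, (i : ℕ) < m - 1 → ∀ v : Fin n,
      n / 2 - 1 ≤ (Finset.univ.filter (fun u => (H i).Adj v u)).card) ∧
    (∀ v : Fin n,
      (Finset.univ.filter (fun u => (H ⟨m - 1, by omega⟩).Adj v u)).card = n / 2) ∧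
    ¬ ∃ (g : Fin n ↪ Fin n) (φ : Sym2 (Fin n) → Fin m),
        Set.InjOn φ ↑F.edgeFinset ∧ F.edgeFinset.image φ = Finset.univ ∧
        ∀ e ∈ F.edgeFinset, Sym2.map g e ∈ (H (φ e)).edgeSet := by
  have hmemB : ∀ x : Fin n, x ∈ B ↔ x ∉ A := by
    intro x
    constructor
    · intro hx hA; exact (Finset.disjoint_left.mp hAB) hA hx
    · intro hx
      have hu : x ∈ A ∪ B := hABu ▸ Finset.mem_univ x
      rcases Finset.mem_union.mp hu with h | h
      · exact absurd h hx
      · exact h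
  refine ⟨?_, ?_, ?_⟩
  · intro i hi v
    rw [hH1 i hi]
    by_cases hv : v ∈ A
    · have hset : (Finset.univ.filter fun u =>
          (SimpleGraph.fromRel fun x y => (x ∈ A ↔ y ∈ A)).Adj v u) = A.erase v := by
        ext u
        simp only [Finset.mem_filter, Finset.mem_univ, true_and,
          SimpleGraph.fromRel_adj, Finset.mem_erase]
        constructor
        · rintro ⟨hne, h | h⟩
          · exact ⟨Ne.symm hne, h.mp hv⟩
          · exact ⟨Ne.symm hne, h.mpr hv⟩
        · rintro ⟨hne, hu⟩
          exact ⟨Ne.symm hne, Or.inl (iff_of_true hv hu)⟩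
      have hc := congrArg Finset.card hset; rw [Finset.card_erase_of_mem hv, hAcard] at hc; exact le_of_eq (by convert hc.symm)
    · have hvB : v ∈ B := (hmemB v).mpr hv
      have hset : (Finset.univ.filter fun u =>
          (SimpleGraph.fromRel fun x y => (x ∈ A ↔ y ∈ A)).Adj v u) = B.erase v := by
        ext u
        simp only [Finset.mem_filter, Finset.mem_univ, true_and,
          SimpleGraph.fromRel_adj, Finset.mem_erase]
        constructor
        · rintro ⟨hne, h | h⟩
          · exact ⟨Ne.symm hne, (hmemB u).mpr (fun hu => hv (h.mpr hu))⟩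
          · exact ⟨Ne.symm hne, (hmemB u).mpr (fun hu => hv (h.mp hu))⟩
        · rintro ⟨hne, hu⟩
          exact ⟨Ne.symm hne, Or.inl (iff_of_false hv ((hmemB u).mp hu))⟩
      have hc := congrArg Finset.card hset; rw [Finset.card_erase_of_mem hvB, hBcard] at hc; exact le_of_eq (by convert hc.symm)
  · intro v
    rw [hH2]
    by_cases hv : v ∈ A
    · have hset : (Finset.univ.filter fun u =>
          (SimpleGraph.fromRel fun x y => ¬(x ∈ A ↔ y ∈ A)).Adj v u) = B := by
        ext u
        simp only [Finset.mem_filter, Finset.mem_univ, true_and,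
          SimpleGraph.fromRel_adj]
        constructor
        · rintro ⟨hne, h | h⟩
          · exact (hmemB u).mpr (fun hu => h (iff_of_true hv hu))
          · exact (hmemB u).mpr (fun hu => h (iff_of_true hu hv))
        · intro hu
          have hu' := (hmemB u).mp hu
          exact ⟨fun h => hu' (h ▸ hv), Or.inl (fun h => hu' (h.mp hv))⟩
      have hc := congrArg Finset.card hset; rw [hBcard] at hc; convert hc
    · have hset : (Finset.univ.filter fun u =>
          (SimpleGraph.fromRel fun x y => ¬(x ∈ A ↔ y ∈ A)).Adj v u) = A := by
        ext u
        simp only [Finset.mem_filter, Finset.mem_univ, true_and,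
          SimpleGraph.fromRel_adj]
        constructor
        · rintro ⟨hne, h | h⟩
          · by_contra hu; exact h (iff_of_false hv hu)
          · by_contra hu; exact h (iff_of_false hu hv)
        · intro hu
          exact ⟨fun h => hv (h ▸ hu), Or.inl (fun h => hv (h.mpr hu))⟩
      have hc := congrArg Finset.card hset; rw [hAcard] at hc; convert hc
  · rintro ⟨g, φ, hinj, himg, hcol⟩
    have hm1 : (⟨m - 1, by omega⟩ : Fin m) ∈ F.edgeFinset.image φ := by
      rw [himg]; exact Finset.mem_univ _
    obtain ⟨e₀, he₀, hφe₀⟩ := Finset.mem_image.mp hm1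
    have hsame : ∀ e ∈ F.edgeFinset, e ≠ e₀ → ∀ x y, e = s(x, y) →
        (g x ∈ A ↔ g y ∈ A) := by
      intro e he hne x y hxy
      have hcol' := hcol e he
      have hφne : φ e ≠ ⟨m - 1, by omega⟩ := by
        intro h
        exact hne (hinj (Finset.mem_coe.mpr he) (Finset.mem_coe.mpr he₀)
          (h.trans hφe₀.symm))
      have hlt : (φ e : ℕ) < m - 1 := by
        have h1 := (φ e).isLt
        by_contra h2
        exact hφne (Fin.ext (show (φ e : ℕ) = m - 1 by omega))
      rw [hH1 _ hlt] at hcol'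
      subst hxy
      rw [Sym2.map_pair_eq, SimpleGraph.mem_edgeSet, SimpleGraph.fromRel_adj] at hcol'
      tauto
    revert he₀ hφe₀ hsame
    induction e₀ using Sym2.ind with
    | _ a b =>
      intro he₀ hφe₀ hsame
      have hadj : F.Adj a b := by
        rw [SimpleGraph.mem_edgeFinset, SimpleGraph.mem_edgeSet] at he₀
        exact he₀
      have hnb := hbridgeless s(a, b)
      rw [SimpleGraph.isBridge_iff] at hnb
      have hreach : (F \ SimpleGraph.fromEdgeSet {s(a, b)}).Reachable a b := by
        by_contra h
        exact hnb (fun hr => h hr)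
      have key : ∀ {x y : Fin n}
          (p : (F \ SimpleGraph.fromEdgeSet {s(a, b)}).Walk x y),
          (g x ∈ A ↔ g y ∈ A) := by
        intro x y p
        induction p with
        | nil => exact Iff.rfl
        | @cons x' z y' h p ih =>
          rw [SimpleGraph.sdiff_adj] at h
          obtain ⟨hF, hnot⟩ := h
          have hne : s(x', z) ≠ s(a, b) := by
            intro hcontra
            exact hnot (by
              rw [SimpleGraph.fromEdgeSet_adj]
              exact ⟨by rw [hcontra]; rfl, hF.ne⟩)
          have := hsame s(x', z) (by
            rw [SimpleGraph.mem_edgeFinset, SimpleGraph.mem_edgeSet]; exact hF)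
            hne x' z rfl
          exact this.trans ih
      obtain ⟨p⟩ := hreach
      have h1 : g a ∈ A ↔ g b ∈ A := key p
      have hcol' := hcol s(a, b) he₀
      rw [hφe₀, hH2, Sym2.map_pair_eq, SimpleGraph.mem_edgeSet,
        SimpleGraph.fromRel_adj] at hcol'
      tauto
end
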